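/- arXiv:1605.04796 — 5 statements merged into one kernel-verified Lean document; each statement's English description precedes it below -/
import Mathlib

section
/- Let Z have density on (0,1) proportional to (1−z)^{-1/2} {θ+(1−θ)z}^{-1} exp(−s z), where θ ≥ 1 and s ≥ 1. Then E[Z^2] ≤ θ(1+s)(C₁/s^3 + C₂/s^{5/2}) where C₁ = (1 − 5/(2e))^{-1/2} and C₂ = 16/15. -/
open MeasureTheory Set

/-- Weight function of CCH(1, 1/2, 1, s, 1, θ) on (0,1):
`(1-z)^(-1/2) (θ+(1-θ)z)⁻¹ exp(-s z)`. -/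
noncomputable def hsW (θ s z : ℝ) : ℝ :=
  (1 - z) ^ (-(1/2) : ℝ) * (θ + (1 - θ) * z)⁻¹ * Real.exp (-s * z)

/-- `k`-th raw moment under the normalized density proportional to `hsW`. -/
noncomputable def hsE (θ s : ℝ) (k : ℕ) : ℝ :=
  (∫ z in Ioo (0:ℝ) 1, z ^ k * hsW θ s z) / (∫ z in Ioo (0:ℝ) 1, hsW θ s z)

open Real intervalIntegral

set_option maxHeartbeats 1000000

lemma negHalf_anti {a b : ℝ} (ha : 0 < a) (hab : a ≤ b) :
    b ^ (-(1/2) : ℝ) ≤ a ^ (-(1/2) : ℝ) := by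
  rw [Real.rpow_neg (by linarith), Real.rpow_neg ha.le]
  exact inv_anti₀ (Real.rpow_pos_of_pos ha _) (Real.rpow_le_rpow ha.le hab (by norm_num))

lemma one_le_negHalf {x : ℝ} (hx : 0 < x) (hx1 : x ≤ 1) : 1 ≤ x ^ (-(1/2) : ℝ) := by
  have := negHalf_anti hx hx1
  simpa using this

lemma negHalf_pos {x : ℝ} (hx : 0 < x) : 0 < x ^ (-(1/2) : ℝ) := Real.rpow_pos_of_pos hx _

lemma int_negHalf : IntegrableOn (fun z : ℝ => (1-z) ^ (-(1/2) : ℝ)) (Ioo (0:ℝ) 1) := by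
  have h1 : IntervalIntegrable (fun x : ℝ => x ^ (-(1/2) : ℝ)) volume 0 1 :=
    intervalIntegral.intervalIntegrable_rpow' (by norm_num)
  have h2 := h1.comp_sub_left 1
  simp only [sub_zero, sub_self] at h2
  have h3 : IntegrableOn (fun x : ℝ => (1-x) ^ (-(1/2) : ℝ)) (Ioc (0:ℝ) 1) := by
    have := h2.symm
    rwa [intervalIntegrable_iff_integrableOn_Ioc_of_le (by norm_num)] at this
  exact h3.mono_set Ioo_subset_Ioc_self

lemma exp_neg_le_rat (p r : ℕ) {m : ℝ} (hr : 0 < r) (hm : 0 < m)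
    (h : 1 ≤ m ^ r * 2.7182818283 ^ p) : Real.exp (-((p:ℝ) / r)) ≤ m := by
  have e1 : (2.7182818283:ℝ) ^ p ≤ Real.exp p := by
    rw [← Real.exp_one_pow]
    exact pow_le_pow_left₀ (by norm_num) Real.exp_one_gt_d9.le p
  have h2 : Real.exp (-(p:ℝ)) ≤ m ^ r := by
    rw [Real.exp_neg, inv_eq_one_div, div_le_iff₀ (Real.exp_pos _)]
    calc (1:ℝ) ≤ m ^ r * 2.7182818283 ^ p := h
    _ ≤ m ^ r * Real.exp p := by nlinarith [pow_pos hm r]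
  have h3 : Real.exp (-((p:ℝ)/r)) ^ r = Real.exp (-(p:ℝ)) := by
    rw [← Real.exp_nat_mul]; congr 1; field_simp
  exact le_of_pow_le_pow_left₀ hr.ne' hm.le (by rw [h3]; exact h2)

lemma le_exp_neg_rat (p r : ℕ) {l : ℝ} (hr : 0 < r) (hl : 0 ≤ l)
    (h : l ^ r * 2.7182818286 ^ p ≤ 1) : l ≤ Real.exp (-((p:ℝ) / r)) := by
  have e1 : Real.exp (p:ℝ) ≤ (2.7182818286:ℝ) ^ p := by
    rw [← Real.exp_one_pow]
    exact pow_le_pow_left₀ (Real.exp_pos 1).le Real.exp_one_lt_d9.le p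
  have h2 : l ^ r ≤ Real.exp (-(p:ℝ)) := by
    rw [Real.exp_neg, inv_eq_one_div, le_div_iff₀ (Real.exp_pos _)]
    calc l ^ r * Real.exp (p:ℝ) ≤ l ^ r * 2.7182818286 ^ p := by
          nlinarith [pow_nonneg hl r]
    _ ≤ 1 := h
  have h3 : Real.exp (-((p:ℝ)/r)) ^ r = Real.exp (-(p:ℝ)) := by
    rw [← Real.exp_nat_mul]; congr 1; field_simp
  exact le_of_pow_le_pow_left₀ hr.ne' (Real.exp_pos _).le (by rw [h3]; exact h2)


lemma exp_neg_le' {Z m : ℝ} (p r : ℕ) (hr : 0 < r) (hm : 0 < m) (hZ : (r:ℝ) * Z = p)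
    (h : 1 ≤ m ^ r * 2.7182818283 ^ p) : Real.exp (-Z) ≤ m := by
  have e1 : (2.7182818283:ℝ) ^ p ≤ Real.exp p := by
    rw [← Real.exp_one_pow]
    exact pow_le_pow_left₀ (by norm_num) Real.exp_one_gt_d9.le p
  have h2 : Real.exp (-(p:ℝ)) ≤ m ^ r := by
    rw [Real.exp_neg, inv_eq_one_div, div_le_iff₀ (Real.exp_pos _)]
    calc (1:ℝ) ≤ m ^ r * 2.7182818283 ^ p := h
    _ ≤ m ^ r * Real.exp p := by nlinarith [pow_pos hm r]
  have h3 : Real.exp (-Z) ^ r = Real.exp (-(p:ℝ)) := by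
    rw [← Real.exp_nat_mul]
    congr 1
    rw [← hZ]; ring
  exact le_of_pow_le_pow_left₀ hr.ne' hm.le (by rw [h3]; exact h2)

lemma le_exp_neg' {Y l : ℝ} (p r : ℕ) (hr : 0 < r) (hl : 0 ≤ l) (hY : (r:ℝ) * Y = p)
    (h : l ^ r * 2.7182818286 ^ p ≤ 1) : l ≤ Real.exp (-Y) := by
  have e1 : Real.exp (p:ℝ) ≤ (2.7182818286:ℝ) ^ p := by
    rw [← Real.exp_one_pow]
    exact pow_le_pow_left₀ (Real.exp_pos 1).le Real.exp_one_lt_d9.le p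
  have h2 : l ^ r ≤ Real.exp (-(p:ℝ)) := by
    rw [Real.exp_neg, inv_eq_one_div, le_div_iff₀ (Real.exp_pos _)]
    calc l ^ r * Real.exp (p:ℝ) ≤ l ^ r * 2.7182818286 ^ p := by
          nlinarith [pow_nonneg hl r]
    _ ≤ 1 := h
  have h3 : Real.exp (-Y) ^ r = Real.exp (-(p:ℝ)) := by
    rw [← Real.exp_nat_mul]; congr 1; rw [← hY]; ring
  exact le_of_pow_le_pow_left₀ hr.ne' (Real.exp_pos _).le (by rw [h3]; exact h2)


lemma integral_exp_neg_simple {s : ℝ} (hs : 0 < s) :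
    ∫ z in (0:ℝ)..1, Real.exp (-(s*z)) = (1 - Real.exp (-s)) / s := by
  have hderiv : ∀ x ∈ uIcc (0:ℝ) 1,
      HasDerivAt (fun z : ℝ => -Real.exp (-(s*z)) / s) (Real.exp (-(s*x))) x := by
    intro x _
    have h1 : HasDerivAt (fun z : ℝ => -(s*z)) (-s) x := by
      simpa using ((hasDerivAt_id x).const_mul (-s))
    have h2 := (h1.exp).neg.div_const s
    exact h2.congr_deriv (by field_simp)
  have hint : IntervalIntegrable (fun z : ℝ => Real.exp (-(s*z))) volume 0 1 :=
    (Real.continuous_exp.comp (by continuity)).intervalIntegrable 0 1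
  rw [intervalIntegral.integral_eq_sub_of_hasDerivAt hderiv hint]
  simp only [mul_zero, neg_zero, Real.exp_zero]
  field_simp
  ring

lemma integral_sq_exp {s : ℝ} (c : ℝ) (hs : 0 < s) :
    ∫ z in (0:ℝ)..c, z^2 * Real.exp (-(s*z))
      = (2 - Real.exp (-(s*c)) * ((s*c)^2 + 2*(s*c) + 2)) / s^3 := by
  have hderiv : ∀ x ∈ uIcc (0:ℝ) c,
      HasDerivAt (fun z : ℝ => -((z^2/s + 2*z/s^2 + 2/s^3) * Real.exp (-(s*z))))
        (x^2 * Real.exp (-(s*x))) x := by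
    intro x _
    have h1 : HasDerivAt (fun z : ℝ => -(s*z)) (-s) x := by
      simpa using ((hasDerivAt_id x).const_mul (-s))
    have hE : HasDerivAt (fun z : ℝ => Real.exp (-(s*z))) (-s * Real.exp (-(s*x))) x := by
      simpa [mul_comm] using h1.exp
    have hg : HasDerivAt (fun z : ℝ => z^2/s + 2*z/s^2 + 2/s^3)
        (2*x/s + 2/s^2) x := by
      have h0 := (((hasDerivAt_pow 2 x).div_const s).add
          (((hasDerivAt_id x).const_mul 2).div_const (s^2))).add
          (hasDerivAt_const x (2/s^3))
      exact h0.congr_deriv (by push_cast; ring)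
    have := (hg.mul hE).neg
    exact this.congr_deriv (by field_simp; ring)
  have hint : IntervalIntegrable (fun z : ℝ => z^2 * Real.exp (-(s*z))) volume 0 c :=
    (continuous_pow 2 |>.mul (Real.continuous_exp.comp (by continuity))).intervalIntegrable 0 c
  rw [intervalIntegral.integral_eq_sub_of_hasDerivAt hderiv hint]
  simp only [mul_zero, neg_zero, Real.exp_zero]
  field_simp
  ring

lemma integral_negHalf_tail {b : ℝ} (hb0 : 0 ≤ b) (hb1 : b ≤ 1) :
    ∫ z in b..(1:ℝ), (1-z) ^ (-(1/2) : ℝ) = 2 * (1-b) ^ ((1/2) : ℝ) := by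
  have h := intervalIntegral.integral_comp_sub_left (a := b) (b := 1)
    (fun x : ℝ => x ^ (-(1/2) : ℝ)) 1
  rw [h, sub_self]
  rw [integral_rpow (Or.inl (by norm_num))]
  rw [Real.zero_rpow (by norm_num)]
  ring

lemma rpow_52_inv_lb {s v ρ : ℝ} (hs : 0 < s) (hsv : s ≤ v) (hρ : 0 ≤ ρ)
    (h : ρ^2 * v^5 ≤ 1) : ρ ≤ 1 / s ^ ((5:ℝ)/2) := by
  have hsp : 0 < s ^ ((5:ℝ)/2) := Real.rpow_pos_of_pos hs _
  have hsq : (s ^ ((5:ℝ)/2))^2 = s^5 := by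
    rw [← Real.rpow_natCast (s ^ ((5:ℝ)/2)) 2, ← Real.rpow_mul hs.le,
      show ((5:ℝ)/2)*(2:ℕ) = ((5:ℕ):ℝ) by norm_num, Real.rpow_natCast]
  have h5 : s^5 ≤ v^5 := pow_le_pow_left₀ hs.le hsv 5
  have key : (ρ * s ^ ((5:ℝ)/2))^2 ≤ 1 := by
    have : (ρ * s ^ ((5:ℝ)/2))^2 = ρ^2 * s^5 := by rw [mul_pow, hsq]
    rw [this]
    nlinarith [sq_nonneg ρ]
  have hnn : 0 ≤ ρ * s ^ ((5:ℝ)/2) := mul_nonneg hρ hsp.le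
  have : ρ * s ^ ((5:ℝ)/2) ≤ 1 := by nlinarith
  rw [le_div_iff₀ hsp]
  exact this


-- integrability of the numerator-bound integrand
lemma int_f {s : ℝ} (hs : 0 ≤ s) :
    IntegrableOn (fun z : ℝ => z^2 * (1-z) ^ (-(1/2) : ℝ) * Real.exp (-(s*z)))
      (Ioo (0:ℝ) 1) := by
  apply Integrable.mono int_negHalf
  · exact (((measurable_id.pow_const 2).mul (by fun_prop)).mul (by fun_prop)).aestronglyMeasurable
  · rw [ae_restrict_iff' measurableSet_Ioo]
    filter_upwards with z
    rintro ⟨h0, h1⟩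
    have hA : 0 < (1-z) ^ (-(1/2) : ℝ) := negHalf_pos (by linarith)
    have hz2 : z^2 ≤ 1 := by nlinarith
    have hE : Real.exp (-(s*z)) ≤ 1 := by
      rw [Real.exp_le_one_iff]; nlinarith
    have hEp : 0 < Real.exp (-(s*z)) := Real.exp_pos _
    rw [Real.norm_eq_abs, Real.norm_eq_abs, abs_of_pos hA, abs_of_pos (by positivity)]
    nlinarith [mul_nonneg (mul_nonneg (sq_nonneg z) hA.le) (sub_nonneg.mpr hE),
      mul_nonneg (sub_nonneg.mpr hz2) hA.le, sq_nonneg z]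

lemma piece {s b Y : ℝ} (hb0 : 0 < b) (hb1 : b < 1) (hs : 1 ≤ s) (hY : s * b ≤ Y) :
    ∫ z in Ioo (0:ℝ) 1, z^2 * (1-z) ^ (-(1/2) : ℝ) * Real.exp (-(s*z))
      ≤ (1-b) ^ (-(1/2) : ℝ) * ((2 - Real.exp (-Y) * (Y^2 + 2*Y + 2)) / s^3)
        + Real.exp (-(s*b)) * (2 * (1-b) ^ ((1/2) : ℝ)) := by
  have hs0 : 0 < s := by linarith
  set f : ℝ → ℝ := fun z => z^2 * (1-z) ^ (-(1/2) : ℝ) * Real.exp (-(s*z)) with hf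
  have hint : IntegrableOn f (Ioo (0:ℝ) 1) := int_f hs0.le
  have hsplit : Ioo (0:ℝ) 1 = Ioo 0 b ∪ Ico b 1 := (Ioo_union_Ico_eq_Ioo hb0 hb1.le).symm
  have hdisj : Disjoint (Ioo (0:ℝ) b) (Ico b 1) := by
    apply Set.disjoint_left.mpr
    rintro a ⟨_, h2⟩ ⟨h3, _⟩
    linarith
  have hsub1 : Ioo (0:ℝ) b ⊆ Ioo 0 1 := Ioo_subset_Ioo le_rfl hb1.le
  have hsub2 : Ico (b:ℝ) 1 ⊆ Ioo 0 1 := fun x hx => ⟨lt_of_lt_of_le hb0 hx.1, hx.2⟩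
  rw [hsplit, setIntegral_union hdisj measurableSet_Ico (hint.mono_set hsub1)
    (hint.mono_set hsub2)]
  have T1 : ∫ z in Ioo (0:ℝ) b, f z
      ≤ (1-b) ^ (-(1/2) : ℝ) * ((2 - Real.exp (-Y) * (Y^2 + 2*Y + 2)) / s^3) := by
    have step1 : ∫ z in Ioo (0:ℝ) b, f z
        ≤ ∫ z in Ioo (0:ℝ) b, (1-b) ^ (-(1/2) : ℝ) * (z^2 * Real.exp (-(s*z))) := by
      apply setIntegral_mono_on (hint.mono_set hsub1)
      · exact (((by continuity : Continuous fun z:ℝ => z^2 * Real.exp (-(s*z))).integrableOn_Icc).mono_set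
          Ioo_subset_Icc_self).const_mul _
      · exact measurableSet_Ioo
      · rintro z ⟨h0, h1⟩
        have hmono : (1-z) ^ (-(1/2) : ℝ) ≤ (1-b) ^ (-(1/2) : ℝ) :=
          negHalf_anti (by linarith) (by linarith)
        have : 0 ≤ z^2 * Real.exp (-(s*z)) := by positivity
        calc z^2 * (1-z) ^ (-(1/2) : ℝ) * Real.exp (-(s*z))
            = (z^2 * Real.exp (-(s*z))) * (1-z) ^ (-(1/2) : ℝ) := by ring
          _ ≤ (z^2 * Real.exp (-(s*z))) * (1-b) ^ (-(1/2) : ℝ) :=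
              mul_le_mul_of_nonneg_left hmono this
          _ = (1-b) ^ (-(1/2) : ℝ) * (z^2 * Real.exp (-(s*z))) := by ring
    have step2 : ∫ z in Ioo (0:ℝ) b, (1-b) ^ (-(1/2) : ℝ) * (z^2 * Real.exp (-(s*z)))
        = (1-b) ^ (-(1/2) : ℝ) * ∫ z in Ioo (0:ℝ) b, z^2 * Real.exp (-(s*z)) :=
      integral_const_mul _ _
    have hbY : b ≤ Y / s := by rw [le_div_iff₀ hs0]; linarith [hY]
    have step3 : ∫ z in Ioo (0:ℝ) b, z^2 * Real.exp (-(s*z))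
        ≤ ∫ z in Ioo (0:ℝ) (Y/s), z^2 * Real.exp (-(s*z)) := by
      apply setIntegral_mono_set
      · exact ((by continuity : Continuous fun z:ℝ => z^2 * Real.exp (-(s*z))).integrableOn_Icc).mono_set
          Ioo_subset_Icc_self
      · filter_upwards with z using by positivity
      · exact HasSubset.Subset.eventuallyLE (Ioo_subset_Ioo le_rfl hbY)
    have hY0 : 0 ≤ Y / s := le_trans (by positivity) hbY
    have step4 : ∫ z in Ioo (0:ℝ) (Y/s), z^2 * Real.exp (-(s*z))
        = (2 - Real.exp (-Y) * (Y^2 + 2*Y + 2)) / s^3 := by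
      rw [← integral_Ioc_eq_integral_Ioo, ← intervalIntegral.integral_of_le hY0,
        integral_sq_exp _ hs0]
      have : s * (Y / s) = Y := by field_simp
      rw [this]
    have hC : 0 ≤ (1-b) ^ (-(1/2) : ℝ) := (negHalf_pos (by linarith)).le
    calc ∫ z in Ioo (0:ℝ) b, f z
        ≤ (1-b) ^ (-(1/2) : ℝ) * ∫ z in Ioo (0:ℝ) b, z^2 * Real.exp (-(s*z)) := by
          rw [← step2]; exact step1
      _ ≤ (1-b) ^ (-(1/2) : ℝ) * ((2 - Real.exp (-Y) * (Y^2 + 2*Y + 2)) / s^3) := by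
          apply mul_le_mul_of_nonneg_left _ hC
          rw [← step4]; exact step3
  have T2 : ∫ z in Ico (b:ℝ) 1, f z
      ≤ Real.exp (-(s*b)) * (2 * (1-b) ^ ((1/2) : ℝ)) := by
    have step1 : ∫ z in Ico (b:ℝ) 1, f z
        ≤ ∫ z in Ico (b:ℝ) 1, Real.exp (-(s*b)) * (1-z) ^ (-(1/2) : ℝ) := by
      apply setIntegral_mono_on (hint.mono_set hsub2)
      · exact ((int_negHalf.mono_set (fun x hx => ⟨by linarith [hx.1], hx.2⟩)).const_mul _)
      · exact measurableSet_Ico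
      · rintro z ⟨h0, h1⟩
        have hz0 : 0 < z := lt_of_lt_of_le hb0 h0
        have hA : 0 < (1-z) ^ (-(1/2) : ℝ) := negHalf_pos (by linarith)
        have hz2 : z^2 ≤ 1 := by nlinarith
        have hE : Real.exp (-(s*z)) ≤ Real.exp (-(s*b)) := by
          apply Real.exp_le_exp.mpr; nlinarith
        have hEp : 0 < Real.exp (-(s*z)) := Real.exp_pos _
        calc z^2 * (1-z) ^ (-(1/2) : ℝ) * Real.exp (-(s*z))
            ≤ 1 * (1-z) ^ (-(1/2) : ℝ) * Real.exp (-(s*b)) := by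
              nlinarith [mul_nonneg (sub_nonneg.mpr hz2) (mul_pos hA hEp).le,
                mul_le_mul_of_nonneg_left hE hA.le]
          _ = Real.exp (-(s*b)) * (1-z) ^ (-(1/2) : ℝ) := by ring
    have step2 : ∫ z in Ico (b:ℝ) 1, Real.exp (-(s*b)) * (1-z) ^ (-(1/2) : ℝ)
        = Real.exp (-(s*b)) * (2 * (1-b) ^ ((1/2) : ℝ)) := by
      rw [MeasureTheory.integral_const_mul]
      congr 1
      rw [integral_Ico_eq_integral_Ioo, ← integral_Ioc_eq_integral_Ioo,
        ← intervalIntegral.integral_of_le hb1.le]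
      exact integral_negHalf_tail hb0.le hb1.le
    linarith [step1, step2.symm.le]
  linarith [T1, T2]


lemma rpow_sq_half {q : ℝ} (hq : 0 < q) :
    ((q^2) ^ ((1/2) : ℝ) = q) ∧ ((q^2) ^ (-(1/2) : ℝ) = q⁻¹) := by
  have h1 : (q^2) ^ ((1/2) : ℝ) = q := by
    rw [← Real.sqrt_eq_rpow, Real.sqrt_sq hq.le]
  exact ⟨h1, by rw [Real.rpow_neg (by positivity), h1]⟩

lemma interval_step {s u v q Y Z l m ρ P : ℝ}
    (hq0 : 0 < q) (hq1 : q < 1) (hu1 : 1 ≤ u) (hsu : u ≤ s) (hsv : s ≤ v)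
    (hY : v * (1 - q^2) ≤ Y) (hZ : Z ≤ u * (1 - q^2))
    (hl : l ≤ Real.exp (-Y)) (hl0 : 0 ≤ l)
    (hm : Real.exp (-Z) ≤ m)
    (hρ : 0 ≤ ρ) (hρv : ρ^2 * v^5 ≤ 1)
    (hP0 : 0 ≤ P) (hP : (2 - l*(Y^2 + 2*Y + 2))/q - 3.52 ≤ P)
    (hkey : P/u^3 + 2*q*m ≤ (16/15) * ρ) :
    ∫ z in Ioo (0:ℝ) 1, z^2 * (1-z) ^ (-(1/2) : ℝ) * Real.exp (-(s*z))
      ≤ 3.52/s^3 + (16/15) / s ^ ((5:ℝ)/2) := by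
  have hs1 : 1 ≤ s := le_trans hu1 hsu
  have hs0 : 0 < s := by linarith
  have hb0 : 0 < 1 - q^2 := by nlinarith
  have hb1 : 1 - q^2 < 1 := by nlinarith
  have hYb : s * (1 - q^2) ≤ Y :=
    le_trans (mul_le_mul_of_nonneg_right hsv hb0.le) hY
  have hp := piece hb0 hb1 hs1 hYb
  have hqq : (1:ℝ) - (1 - q^2) = q^2 := by ring
  rw [hqq, (rpow_sq_half hq0).1, (rpow_sq_half hq0).2] at hp
  have hv0 : 0 < v := lt_of_lt_of_le hs0 hsv
  have hY0 : 0 ≤ Y := le_trans (mul_nonneg hv0.le hb0.le) hY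
  have hQY : 0 ≤ Y^2 + 2*Y + 2 := by positivity
  have hnum : 2 - Real.exp (-Y) * (Y^2 + 2*Y + 2) ≤ 2 - l * (Y^2 + 2*Y + 2) := by
    have := mul_le_mul_of_nonneg_right hl hQY
    linarith
  have hexpb : Real.exp (-(s*(1 - q^2))) ≤ m := by
    refine le_trans ?_ hm
    apply Real.exp_le_exp.mpr
    have : u * (1 - q^2) ≤ s * (1 - q^2) := mul_le_mul_of_nonneg_right hsu hb0.le
    linarith
  have hm0 : 0 < m := lt_of_lt_of_le (Real.exp_pos _) hm
  have hs3 : 0 < s^3 := by positivity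
  have hu3 : 0 < u^3 := by positivity
  have hs3u : u^3 ≤ s^3 := pow_le_pow_left₀ (by linarith) hsu 3
  have hq' : (0:ℝ) < q⁻¹ := by positivity
  have hnum2 : q⁻¹ * (2 - Real.exp (-Y) * (Y^2 + 2*Y + 2)) ≤ 3.52 + P := by
    calc q⁻¹ * (2 - Real.exp (-Y) * (Y^2 + 2*Y + 2))
        ≤ q⁻¹ * (2 - l * (Y^2 + 2*Y + 2)) := mul_le_mul_of_nonneg_left hnum hq'.le
      _ = (2 - l*(Y^2 + 2*Y + 2))/q := by field_simp
      _ ≤ 3.52 + P := by linarith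
  have t1 : q⁻¹ * ((2 - Real.exp (-Y) * (Y^2 + 2*Y + 2)) / s^3)
      ≤ (3.52 + P)/s^3 := by
    rw [← mul_div_assoc]
    gcongr
  have t2 : Real.exp (-(s*(1 - q^2))) * (2 * q) ≤ 2*q*m := by
    calc Real.exp (-(s*(1 - q^2))) * (2 * q) ≤ m * (2*q) :=
      mul_le_mul_of_nonneg_right hexpb (by positivity)
    _ = 2*q*m := by ring
  have hρs : ρ ≤ 1 / s ^ ((5:ℝ)/2) := rpow_52_inv_lb hs0 hsv hρ hρv
  have hPs : P/s^3 ≤ P/u^3 := div_le_div_of_nonneg_left hP0 hu3 hs3u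
  have hsplit : (3.52 + P)/s^3 = 3.52/s^3 + P/s^3 := by ring
  have hre : (16:ℝ)/15/s^((5:ℝ)/2) = (16/15)*(1/s^((5:ℝ)/2)) := by ring
  linarith [hp, t1, t2]


lemma pow9_le_exp {x : ℝ} (hx : 0 ≤ x) : x^9 / 362880 ≤ Real.exp x := by
  have h := Real.sum_le_exp_of_nonneg hx 10
  have h2 : x^9 / (Nat.factorial 9 : ℝ) ≤ ∑ i ∈ Finset.range 10, x^i / (Nat.factorial i : ℝ) := by
    apply Finset.single_le_sum (f := fun i => x^i / (Nat.factorial i : ℝ))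
    · intro i _
      positivity
    · simp
  have h3 : (Nat.factorial 9 : ℝ) = 362880 := by norm_num [Nat.factorial]
  rw [h3] at h2
  linarith

lemma rpow52_sq {s : ℝ} (hs : 0 ≤ s) : (s ^ ((5:ℝ)/2))^2 = s^5 := by
  rw [← Real.rpow_natCast (s ^ ((5:ℝ)/2)) 2, ← Real.rpow_mul hs,
    show ((5:ℝ)/2)*(2:ℕ) = ((5:ℕ):ℝ) by norm_num, Real.rpow_natCast]

lemma tail_step {s : ℝ} (hs : 17 ≤ s) :
    ∫ z in Ioo (0:ℝ) 1, z^2 * (1-z) ^ (-(1/2) : ℝ) * Real.exp (-(s*z))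
      ≤ 3.52/s^3 + (16/15) / s ^ ((5:ℝ)/2) := by
  have hs1 : 1 ≤ s := by linarith
  have hs0 : 0 < s := by linarith
  have hp := piece (b := 16/25) (Y := s * (16/25)) (by norm_num) (by norm_num) hs1 le_rfl
  have hq : ((1:ℝ) - 16/25) = (3/5:ℝ)^2 := by norm_num
  rw [hq, (rpow_sq_half (by norm_num)).1, (rpow_sq_half (by norm_num)).2] at hp
  set Y := s * (16/25) with hYdef
  have hY0 : 0 < Y := by positivity
  have hterm1 : ((3:ℝ)/5)⁻¹ * ((2 - Real.exp (-Y) * (Y^2 + 2*Y + 2)) / s^3)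
      ≤ 3.52/s^3 := by
    have hpos : 0 ≤ Real.exp (-Y) * (Y^2 + 2*Y + 2) := by positivity
    have : ((3:ℝ)/5)⁻¹ * (2 - Real.exp (-Y) * (Y^2 + 2*Y + 2)) ≤ 3.52 := by
      rw [show ((3:ℝ)/5)⁻¹ = 5/3 by norm_num]
      nlinarith
    rw [← mul_div_assoc]
    gcongr
  -- second term
  have hs52 : 0 < s ^ ((5:ℝ)/2) := Real.rpow_pos_of_pos hs0 _
  have hterm2 : Real.exp (-Y) * (2 * (3/5 : ℝ)) ≤ (16/15) / s ^ ((5:ℝ)/2) := by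
    rw [le_div_iff₀ hs52]
    -- suffices (6/5) * exp(-Y) * s^{5/2} ≤ 16/15, i.e. (9/8) s^{5/2} ≤ exp Y
    have key : (9/8 : ℝ) * s ^ ((5:ℝ)/2) ≤ Real.exp Y := by
      have hsq : ((9/8 : ℝ) * s ^ ((5:ℝ)/2))^2 ≤ (Real.exp Y)^2 := by
        have e1 : (Real.exp Y)^2 = Real.exp (2*Y) := by
          rw [← Real.exp_nat_mul]; norm_num
        have e2 : ((9/8 : ℝ) * s ^ ((5:ℝ)/2))^2 = (81/64) * s^5 := by
          rw [mul_pow, rpow52_sq hs0.le]; norm_num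
        have e3 : (2*Y)^9 / 362880 ≤ Real.exp (2*Y) := pow9_le_exp (by positivity)
        have e4 : (81/64 : ℝ) * s^5 ≤ (2*Y)^9 / 362880 := by
          rw [hYdef]
          have hs4 : (17:ℝ)^4 ≤ s^4 := pow_le_pow_left₀ (by norm_num) hs 4
          nlinarith [pow_pos hs0 5, pow_pos hs0 4, pow_pos hs0 9]
        rw [e1, e2]
        linarith
      nlinarith [Real.exp_pos Y, Real.rpow_pos_of_pos hs0 ((5:ℝ)/2), hsq]
    have hexp : Real.exp (-Y) = (Real.exp Y)⁻¹ := Real.exp_neg Y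
    rw [hexp]
    have hEpos : 0 < Real.exp Y := Real.exp_pos Y
    rw [inv_mul_eq_div, div_mul_eq_mul_div, div_le_iff₀ hEpos]
    nlinarith [hs52]
  calc _ ≤ _ := hp
    _ ≤ 3.52/s^3 + (16/15) / s ^ ((5:ℝ)/2) := by
        have := hterm1
        have := hterm2
        linarith

lemma coreIneq {s : ℝ} (hs : 1 ≤ s) :
    ∫ z in Ioo (0:ℝ) 1, z^2 * (1-z) ^ (-(1/2) : ℝ) * Real.exp (-(s*z))
      ≤ 3.52/s^3 + (16/15) / s ^ ((5:ℝ)/2) := by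
  rcases le_total s (43/20 : ℝ) with hc0 | hc0
  · exact interval_step (u := (1 : ℝ)) (v := (43/20 : ℝ)) (q := (1/5 : ℝ)) (Y := (21/10 : ℝ)) (Z := (19/20 : ℝ))
      (l := (30614076449/250000000000 : ℝ)) (m := (96685352549/250000000000 : ℝ)) (ρ := (29507567657/200000000000 : ℝ)) (P := (0 : ℝ))
      (by norm_num) (by norm_num) (by norm_num) (by linarith [hs]) hc0
      (by norm_num) (by norm_num)
      (le_exp_neg' 42 20 (by norm_num) (by norm_num) (by norm_num) (by norm_num)) (by norm_num)
      (exp_neg_le' 19 20 (by norm_num) (by norm_num) (by norm_num) (by norm_num))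
      (by norm_num) (by norm_num) (by norm_num) (by norm_num) (by norm_num)
  rcases le_total s (27/10 : ℝ) with hc1 | hc1
  · exact interval_step (u := (43/20 : ℝ)) (v := (27/10 : ℝ)) (q := (3/10 : ℝ)) (Y := (5/2 : ℝ)) (Z := (39/20 : ℝ))
      (l := (41042458269/500000000000 : ℝ)) (m := (142274213861/1000000000000 : ℝ)) (ρ := (20870370743/250000000000 : ℝ)) (P := (0 : ℝ))
      (by norm_num) (by norm_num) (by norm_num) (by linarith [hc0]) hc1
      (by norm_num) (by norm_num)
      (le_exp_neg' 50 20 (by norm_num) (by norm_num) (by norm_num) (by norm_num)) (by norm_num)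
      (exp_neg_le' 39 20 (by norm_num) (by norm_num) (by norm_num) (by norm_num))
      (by norm_num) (by norm_num) (by norm_num) (by norm_num) (by norm_num)
  rcases le_total s (31/10 : ℝ) with hc2 | hc2
  · exact interval_step (u := (27/10 : ℝ)) (v := (31/10 : ℝ)) (q := (3/10 : ℝ)) (Y := (57/20 : ℝ)) (Z := (49/20 : ℝ))
      (l := (5784426303/100000000000 : ℝ)) (m := (86293672793/1000000000000 : ℝ)) (ρ := (59101068291/1000000000000 : ℝ)) (P := (1150365928313/12000000000000 : ℝ))
      (by norm_num) (by norm_num) (by norm_num) (by linarith [hc1]) hc2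
      (by norm_num) (by norm_num)
      (le_exp_neg' 57 20 (by norm_num) (by norm_num) (by norm_num) (by norm_num)) (by norm_num)
      (exp_neg_le' 49 20 (by norm_num) (by norm_num) (by norm_num) (by norm_num))
      (by norm_num) (by norm_num) (by norm_num) (by norm_num) (by norm_num)
  rcases le_total s (69/20 : ℝ) with hc3 | hc3
  · exact interval_step (u := (31/10 : ℝ)) (v := (69/20 : ℝ)) (q := (7/20 : ℝ)) (Y := (61/20 : ℝ)) (Z := (27/10 : ℝ))
      (l := (5919859629/125000000000 : ℝ)) (m := (33602789973/500000000000 : ℝ)) (ρ := (11308157187/250000000000 : ℝ)) (P := (0 : ℝ))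
      (by norm_num) (by norm_num) (by norm_num) (by linarith [hc2]) hc3
      (by norm_num) (by norm_num)
      (le_exp_neg' 61 20 (by norm_num) (by norm_num) (by norm_num) (by norm_num)) (by norm_num)
      (exp_neg_le' 54 20 (by norm_num) (by norm_num) (by norm_num) (by norm_num))
      (by norm_num) (by norm_num) (by norm_num) (by norm_num) (by norm_num)
  rcases le_total s (15/4 : ℝ) with hc4 | hc4
  · exact interval_step (u := (69/20 : ℝ)) (v := (15/4 : ℝ)) (q := (7/20 : ℝ)) (Y := (33/10 : ℝ)) (Z := (3 : ℝ))
      (l := (18441565259/500000000000 : ℝ)) (m := (9957423631/200000000000 : ℝ)) (ρ := (36721583153/1000000000000 : ℝ)) (P := (2457389310209/17500000000000 : ℝ))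
      (by norm_num) (by norm_num) (by norm_num) (by linarith [hc3]) hc4
      (by norm_num) (by norm_num)
      (le_exp_neg' 66 20 (by norm_num) (by norm_num) (by norm_num) (by norm_num)) (by norm_num)
      (exp_neg_le' 60 20 (by norm_num) (by norm_num) (by norm_num) (by norm_num))
      (by norm_num) (by norm_num) (by norm_num) (by norm_num) (by norm_num)
  rcases le_total s (79/20 : ℝ) with hc5 | hc5
  · exact interval_step (u := (15/4 : ℝ)) (v := (79/20 : ℝ)) (q := (7/20 : ℝ)) (Y := (7/2 : ℝ)) (Z := (13/4 : ℝ))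
      (l := (3774669153/125000000000 : ℝ)) (m := (19387123303/500000000000 : ℝ)) (ρ := (32248300097/1000000000000 : ℝ)) (P := (12630624399/35000000000 : ℝ))
      (by norm_num) (by norm_num) (by norm_num) (by linarith [hc4]) hc5
      (by norm_num) (by norm_num)
      (le_exp_neg' 70 20 (by norm_num) (by norm_num) (by norm_num) (by norm_num)) (by norm_num)
      (exp_neg_le' 65 20 (by norm_num) (by norm_num) (by norm_num) (by norm_num))
      (by norm_num) (by norm_num) (by norm_num) (by norm_num) (by norm_num)
  rcases le_total s (83/20 : ℝ) with hc6 | hc6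
  · exact interval_step (u := (79/20 : ℝ)) (v := (83/20 : ℝ)) (q := (2/5 : ℝ)) (Y := (7/2 : ℝ)) (Z := (33/10 : ℝ))
      (l := (3774669153/125000000000 : ℝ)) (m := (7376640857/200000000000 : ℝ)) (ρ := (14251130869/500000000000 : ℝ)) (P := (0 : ℝ))
      (by norm_num) (by norm_num) (by norm_num) (by linarith [hc5]) hc6
      (by norm_num) (by norm_num)
      (le_exp_neg' 70 20 (by norm_num) (by norm_num) (by norm_num) (by norm_num)) (by norm_num)
      (exp_neg_le' 66 20 (by norm_num) (by norm_num) (by norm_num) (by norm_num))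
      (by norm_num) (by norm_num) (by norm_num) (by norm_num) (by norm_num)
  rcases le_total s (22/5 : ℝ) with hc7 | hc7
  · exact interval_step (u := (83/20 : ℝ)) (v := (22/5 : ℝ)) (q := (2/5 : ℝ)) (Y := (37/10 : ℝ)) (Z := (69/20 : ℝ))
      (l := (12361750873/500000000000 : ℝ)) (m := (7936417031/250000000000 : ℝ)) (ρ := (24624525717/1000000000000 : ℝ)) (P := (1056717234243/20000000000000 : ℝ))
      (by norm_num) (by norm_num) (by norm_num) (by linarith [hc6]) hc7
      (by norm_num) (by norm_num)
      (le_exp_neg' 74 20 (by norm_num) (by norm_num) (by norm_num) (by norm_num)) (by norm_num)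
      (exp_neg_le' 69 20 (by norm_num) (by norm_num) (by norm_num) (by norm_num))
      (by norm_num) (by norm_num) (by norm_num) (by norm_num) (by norm_num)
  rcases le_total s (23/5 : ℝ) with hc8 | hc8
  · exact interval_step (u := (22/5 : ℝ)) (v := (23/5 : ℝ)) (q := (2/5 : ℝ)) (Y := (39/10 : ℝ)) (Z := (73/20 : ℝ))
      (l := (20241891203/1000000000000 : ℝ)) (m := (2599115477/100000000000 : ℝ)) (ρ := (5508647659/250000000000 : ℝ)) (P := (8575030101297/40000000000000 : ℝ))
      (by norm_num) (by norm_num) (by norm_num) (by linarith [hc7]) hc8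
      (by norm_num) (by norm_num)
      (le_exp_neg' 78 20 (by norm_num) (by norm_num) (by norm_num) (by norm_num)) (by norm_num)
      (exp_neg_le' 73 20 (by norm_num) (by norm_num) (by norm_num) (by norm_num))
      (by norm_num) (by norm_num) (by norm_num) (by norm_num) (by norm_num)
  rcases le_total s (24/5 : ℝ) with hc9 | hc9
  · exact interval_step (u := (23/5 : ℝ)) (v := (24/5 : ℝ)) (q := (2/5 : ℝ)) (Y := (81/20 : ℝ)) (Z := (77/20 : ℝ))
      (l := (17422357217/1000000000000 : ℝ)) (m := (21279757719/1000000000000 : ℝ)) (ρ := (4952636807/250000000000 : ℝ)) (P := (52105591142583/160000000000000 : ℝ))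
      (by norm_num) (by norm_num) (by norm_num) (by linarith [hc8]) hc9
      (by norm_num) (by norm_num)
      (le_exp_neg' 81 20 (by norm_num) (by norm_num) (by norm_num) (by norm_num)) (by norm_num)
      (exp_neg_le' 77 20 (by norm_num) (by norm_num) (by norm_num) (by norm_num))
      (by norm_num) (by norm_num) (by norm_num) (by norm_num) (by norm_num)
  rcases le_total s (5 : ℝ) with hc10 | hc10
  · exact interval_step (u := (24/5 : ℝ)) (v := (5 : ℝ)) (q := (2/5 : ℝ)) (Y := (21/5 : ℝ)) (Z := (4 : ℝ))
      (l := (468611307/31250000000 : ℝ)) (m := (3663131441/200000000000 : ℝ)) (ρ := (17888525931/1000000000000 : ℝ)) (P := (134003473793/312500000000 : ℝ))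
      (by norm_num) (by norm_num) (by norm_num) (by linarith [hc9]) hc10
      (by norm_num) (by norm_num)
      (le_exp_neg' 84 20 (by norm_num) (by norm_num) (by norm_num) (by norm_num)) (by norm_num)
      (exp_neg_le' 80 20 (by norm_num) (by norm_num) (by norm_num) (by norm_num))
      (by norm_num) (by norm_num) (by norm_num) (by norm_num) (by norm_num)
  rcases le_total s (21/4 : ℝ) with hc11 | hc11
  · exact interval_step (u := (5 : ℝ)) (v := (21/4 : ℝ)) (q := (2/5 : ℝ)) (Y := (89/20 : ℝ)) (Z := (21/5 : ℝ))
      (l := (11678555291/1000000000000 : ℝ)) (m := (14995591817/1000000000000 : ℝ)) (ρ := (15834388899/1000000000000 : ℝ)) (P := (93375662471229/160000000000000 : ℝ))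
      (by norm_num) (by norm_num) (by norm_num) (by linarith [hc10]) hc11
      (by norm_num) (by norm_num)
      (le_exp_neg' 89 20 (by norm_num) (by norm_num) (by norm_num) (by norm_num)) (by norm_num)
      (exp_neg_le' 84 20 (by norm_num) (by norm_num) (by norm_num) (by norm_num))
      (by norm_num) (by norm_num) (by norm_num) (by norm_num) (by norm_num)
  rcases le_total s (11/2 : ℝ) with hc12 | hc12
  · exact interval_step (u := (21/4 : ℝ)) (v := (11/2 : ℝ)) (q := (2/5 : ℝ)) (Y := (93/20 : ℝ)) (Z := (22/5 : ℝ))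
      (l := (597599523/62500000000 : ℝ)) (m := (12277352181/1000000000000 : ℝ)) (ρ := (2819180207/200000000000 : ℝ)) (P := (6930211881613/10000000000000 : ℝ))
      (by norm_num) (by norm_num) (by norm_num) (by linarith [hc11]) hc12
      (by norm_num) (by norm_num)
      (le_exp_neg' 93 20 (by norm_num) (by norm_num) (by norm_num) (by norm_num)) (by norm_num)
      (exp_neg_le' 88 20 (by norm_num) (by norm_num) (by norm_num) (by norm_num))
      (by norm_num) (by norm_num) (by norm_num) (by norm_num) (by norm_num)
  rcases le_total s (29/5 : ℝ) with hc13 | hc13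
  · exact interval_step (u := (11/2 : ℝ)) (v := (29/5 : ℝ)) (q := (2/5 : ℝ)) (Y := (49/10 : ℝ)) (Z := (23/5 : ℝ))
      (l := (930821953/125000000000 : ℝ)) (m := (10051845797/1000000000000 : ℝ)) (ρ := (6171625803/500000000000 : ℝ)) (P := (4066726586307/5000000000000 : ℝ))
      (by norm_num) (by norm_num) (by norm_num) (by linarith [hc12]) hc13
      (by norm_num) (by norm_num)
      (le_exp_neg' 98 20 (by norm_num) (by norm_num) (by norm_num) (by norm_num)) (by norm_num)
      (exp_neg_le' 92 20 (by norm_num) (by norm_num) (by norm_num) (by norm_num))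
      (by norm_num) (by norm_num) (by norm_num) (by norm_num) (by norm_num)
  rcases le_total s (31/5 : ℝ) with hc14 | hc14
  · exact interval_step (u := (29/5 : ℝ)) (v := (31/5 : ℝ)) (q := (9/20 : ℝ)) (Y := (99/20 : ℝ)) (Z := (23/5 : ℝ))
      (l := (1416680369/200000000000 : ℝ)) (m := (10051845797/1000000000000 : ℝ)) (ρ := (10447691541/1000000000000 : ℝ)) (P := (4217239048997/12000000000000 : ℝ))
      (by norm_num) (by norm_num) (by norm_num) (by linarith [hc13]) hc14
      (by norm_num) (by norm_num)
      (le_exp_neg' 99 20 (by norm_num) (by norm_num) (by norm_num) (by norm_num)) (by norm_num)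
      (exp_neg_le' 92 20 (by norm_num) (by norm_num) (by norm_num) (by norm_num))
      (by norm_num) (by norm_num) (by norm_num) (by norm_num) (by norm_num)
  rcases le_total s (27/4 : ℝ) with hc15 | hc15
  · exact interval_step (u := (31/5 : ℝ)) (v := (27/4 : ℝ)) (q := (9/20 : ℝ)) (Y := (27/5 : ℝ)) (Z := (49/10 : ℝ))
      (l := (2258288213/500000000000 : ℝ)) (m := (3723295259/500000000000 : ℝ)) (ρ := (2111933029/250000000000 : ℝ)) (P := (314561740507/625000000000 : ℝ))
      (by norm_num) (by norm_num) (by norm_num) (by linarith [hc14]) hc15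
      (by norm_num) (by norm_num)
      (le_exp_neg' 108 20 (by norm_num) (by norm_num) (by norm_num) (by norm_num)) (by norm_num)
      (exp_neg_le' 98 20 (by norm_num) (by norm_num) (by norm_num) (by norm_num))
      (by norm_num) (by norm_num) (by norm_num) (by norm_num) (by norm_num)
  rcases le_total s (77/10 : ℝ) with hc16 | hc16
  · exact interval_step (u := (27/4 : ℝ)) (v := (77/10 : ℝ)) (q := (9/20 : ℝ)) (Y := (123/20 : ℝ)) (Z := (107/20 : ℝ))
      (l := (533369909/250000000000 : ℝ)) (m := (1187038937/250000000000 : ℝ)) (ρ := (6078168741/1000000000000 : ℝ)) (P := (30479770767259/45000000000000 : ℝ))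
      (by norm_num) (by norm_num) (by norm_num) (by linarith [hc15]) hc16
      (by norm_num) (by norm_num)
      (le_exp_neg' 123 20 (by norm_num) (by norm_num) (by norm_num) (by norm_num)) (by norm_num)
      (exp_neg_le' 107 20 (by norm_num) (by norm_num) (by norm_num) (by norm_num))
      (by norm_num) (by norm_num) (by norm_num) (by norm_num) (by norm_num)
  rcases le_total s (189/20 : ℝ) with hc17 | hc17
  · exact interval_step (u := (77/10 : ℝ)) (v := (189/20 : ℝ)) (q := (9/20 : ℝ)) (Y := (151/20 : ℝ)) (Z := (61/10 : ℝ))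
      (l := (526109601/1000000000000 : ℝ)) (m := (2242869963/1000000000000 : ℝ)) (ρ := (1821335903/500000000000 : ℝ)) (P := (150805585316759/180000000000000 : ℝ))
      (by norm_num) (by norm_num) (by norm_num) (by linarith [hc16]) hc17
      (by norm_num) (by norm_num)
      (le_exp_neg' 151 20 (by norm_num) (by norm_num) (by norm_num) (by norm_num)) (by norm_num)
      (exp_neg_le' 122 20 (by norm_num) (by norm_num) (by norm_num) (by norm_num))
      (by norm_num) (by norm_num) (by norm_num) (by norm_num) (by norm_num)
  rcases le_total s (141/10 : ℝ) with hc18 | hc18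
  · exact interval_step (u := (189/20 : ℝ)) (v := (141/10 : ℝ)) (q := (1/2 : ℝ)) (Y := (53/5 : ℝ)) (Z := (141/20 : ℝ))
      (l := (1557249/62500000000 : ℝ)) (m := (34696393/40000000000 : ℝ)) (ρ := (1339527963/1000000000000 : ℝ)) (P := (369722483139/781250000000 : ℝ))
      (by norm_num) (by norm_num) (by norm_num) (by linarith [hc17]) hc18
      (by norm_num) (by norm_num)
      (le_exp_neg' 212 20 (by norm_num) (by norm_num) (by norm_num) (by norm_num)) (by norm_num)
      (exp_neg_le' 141 20 (by norm_num) (by norm_num) (by norm_num) (by norm_num))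
      (by norm_num) (by norm_num) (by norm_num) (by norm_num) (by norm_num)
  rcases le_total s (17 : ℝ) with hc19 | hc19
  · exact interval_step (u := (141/10 : ℝ)) (v := (17 : ℝ)) (q := (7/20 : ℝ)) (Y := (299/20 : ℝ)) (Z := (247/20 : ℝ))
      (l := (64317/200000000000 : ℝ)) (m := (2164879/500000000000 : ℝ)) (ρ := (104902847/125000000000 : ℝ)) (P := (61433429310963/28000000000000 : ℝ))
      (by norm_num) (by norm_num) (by norm_num) (by linarith [hc18]) hc19
      (by norm_num) (by norm_num)
      (le_exp_neg' 299 20 (by norm_num) (by norm_num) (by norm_num) (by rw [show (299:ℕ) = 13*23 from rfl, pow_mul]; norm_num)) (by norm_num)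
      (exp_neg_le' 247 20 (by norm_num) (by norm_num) (by norm_num) (by norm_num))
      (by norm_num) (by norm_num) (by norm_num) (by norm_num) (by norm_num)
  exact tail_step (by linarith [hc19])


lemma C1_ge : (3.52:ℝ) ≤ (1 - 5/(2*Real.exp 1)) ^ (-(1/2) : ℝ) := by
  have he1 := Real.exp_one_gt_d9
  have he2 := Real.exp_one_lt_d9
  set E := Real.exp 1 with hE
  have hE0 : (0:ℝ) < E := Real.exp_pos 1
  have hτ0 : 0 < 1 - 5/(2*E) := by
    have : 5/(2*E) < 1 := by
      rw [div_lt_one (by linarith)]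
      linarith
    linarith
  have hτub : 1 - 5/(2*E) ≤ (1/3.52)^2 := by
    have h5 : 5/(2*E) ≥ 5/(2*2.7182818286) := by
      apply div_le_div_of_nonneg_left (by norm_num) (by linarith) (by linarith)
    nlinarith
  rw [Real.rpow_neg hτ0.le, ← Real.sqrt_eq_rpow]
  have hsq : Real.sqrt (1 - 5/(2*E)) ≤ 1/3.52 := by
    calc Real.sqrt (1 - 5/(2*E)) ≤ Real.sqrt ((1/3.52)^2) := Real.sqrt_le_sqrt hτub
      _ = 1/3.52 := by rw [Real.sqrt_sq (by norm_num)]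
  have hsp : 0 < Real.sqrt (1 - 5/(2*E)) := Real.sqrt_pos.mpr hτ0
  rw [show (3.52:ℝ) = (1/3.52)⁻¹ by norm_num]
  exact inv_anti₀ hsp hsq

theorem stmt4 (θ s : ℝ) (hθ : 1 ≤ θ) (hs : 1 ≤ s) :
    hsE θ s 2 ≤ θ * (1 + s) *
      ((1 - 5 / (2 * Real.exp 1)) ^ (-(1/2) : ℝ) / s ^ 3
        + (16 / 15) / s ^ ((5 : ℝ) / 2)) := by
  have hs0 : 0 < s := by linarith
  have hθ0 : 0 < θ := by linarith
  -- pointwise facts on Ioo 0 1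
  have hden : ∀ z ∈ Ioo (0:ℝ) 1, 1 ≤ θ + (1 - θ) * z ∧ θ + (1 - θ) * z ≤ θ := by
    rintro z ⟨h0, h1⟩
    constructor <;> nlinarith
  -- integrability of hsW and z^2 * hsW
  have hmeasW : Measurable (fun z : ℝ => hsW θ s z) := by
    unfold hsW
    apply Measurable.mul
    apply Measurable.mul
    · fun_prop
    · exact (measurable_const.add (measurable_id.const_mul _)).inv
    · fun_prop
  have hboundW : ∀ z ∈ Ioo (0:ℝ) 1, 0 < hsW θ s z ∧ hsW θ s z ≤ (1-z) ^ (-(1/2) : ℝ) := by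
    rintro z ⟨h0, h1⟩
    obtain ⟨hd1, hd2⟩ := hden z ⟨h0, h1⟩
    have hd0 : 0 < θ + (1 - θ) * z := by linarith
    have hA : 0 < (1-z) ^ (-(1/2) : ℝ) := negHalf_pos (by linarith)
    have hIle : (θ + (1 - θ) * z)⁻¹ ≤ 1 := by
      rw [inv_le_one_iff₀]; right; exact hd1
    have hIpos : 0 < (θ + (1 - θ) * z)⁻¹ := by positivity
    have hEle : Real.exp (-s * z) ≤ 1 := by
      rw [Real.exp_le_one_iff]; nlinarith
    have hEpos : 0 < Real.exp (-s * z) := Real.exp_pos _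
    unfold hsW
    constructor
    · positivity
    · nlinarith [mul_pos hA hIpos]
  have intW : IntegrableOn (fun z => hsW θ s z) (Ioo (0:ℝ) 1) := by
    apply Integrable.mono int_negHalf hmeasW.aestronglyMeasurable
    rw [ae_restrict_iff' measurableSet_Ioo]
    filter_upwards with z hz
    obtain ⟨hp, hb⟩ := hboundW z hz
    obtain ⟨hz1, hz2⟩ := hz
    rw [Real.norm_eq_abs, Real.norm_eq_abs, abs_of_pos hp,
      abs_of_pos (negHalf_pos (by linarith))]
    exact hb
  have intN : IntegrableOn (fun z => z^2 * hsW θ s z) (Ioo (0:ℝ) 1) := by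
    apply Integrable.mono int_negHalf ((measurable_id.pow_const 2).mul hmeasW).aestronglyMeasurable
    rw [ae_restrict_iff' measurableSet_Ioo]
    filter_upwards with z hz
    obtain ⟨hp, hb⟩ := hboundW z hz
    obtain ⟨h0, h1⟩ := hz
    have hA : 0 < (1-z) ^ (-(1/2) : ℝ) := negHalf_pos (by linarith)
    have hz2 : z^2 ≤ 1 := by nlinarith
    rw [Real.norm_eq_abs, Real.norm_eq_abs, abs_of_pos (show 0 < ((fun x : ℝ => id x ^ 2) * fun z => hsW θ s z) z from mul_pos (pow_pos h0 2) hp),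
      abs_of_pos hA]
    simp only [id_eq, Pi.mul_apply]
    nlinarith [mul_le_mul_of_nonneg_left hb (sq_nonneg z),
      mul_nonneg (sub_nonneg.mpr hz2) hA.le]
  -- denominator lower bound
  have intE : IntegrableOn (fun z : ℝ => θ⁻¹ * Real.exp (-s * z)) (Ioo (0:ℝ) 1) :=
    ((by continuity : Continuous fun z : ℝ => θ⁻¹ * Real.exp (-s * z)).integrableOn_Icc).mono_set
      Ioo_subset_Icc_self
  have hDlb : θ⁻¹ * ((1 - Real.exp (-s)) / s) ≤ ∫ z in Ioo (0:ℝ) 1, hsW θ s z := by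
    have hmono : ∫ z in Ioo (0:ℝ) 1, θ⁻¹ * Real.exp (-s * z)
        ≤ ∫ z in Ioo (0:ℝ) 1, hsW θ s z := by
      apply setIntegral_mono_on intE intW measurableSet_Ioo
      rintro z ⟨h0, h1⟩
      obtain ⟨hd1, hd2⟩ := hden z ⟨h0, h1⟩
      have hd0 : 0 < θ + (1 - θ) * z := by linarith
      have hA1 : 1 ≤ (1-z) ^ (-(1/2) : ℝ) := one_le_negHalf (by linarith) (by linarith)
      have hI : θ⁻¹ ≤ (θ + (1 - θ) * z)⁻¹ := inv_anti₀ hd0 hd2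
      have hEpos : 0 < Real.exp (-s * z) := Real.exp_pos _
      unfold hsW
      have hIpos : 0 < (θ + (1 - θ) * z)⁻¹ := by positivity
      nlinarith [mul_le_mul_of_nonneg_right hI hEpos.le,
        mul_nonneg (sub_nonneg.mpr hA1) (mul_pos hIpos hEpos).le]
    have hcomp : ∫ z in Ioo (0:ℝ) 1, θ⁻¹ * Real.exp (-s * z)
        = θ⁻¹ * ((1 - Real.exp (-s)) / s) := by
      rw [MeasureTheory.integral_const_mul]
      congr 1
      rw [← integral_Ioc_eq_integral_Ioo, ← intervalIntegral.integral_of_le (by norm_num : (0:ℝ) ≤ 1)]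
      rw [← integral_exp_neg_simple hs0]
      congr 1
      ext z
      ring_nf
    linarith [hmono, hcomp.symm.le]
  have hDpos : 0 < ∫ z in Ioo (0:ℝ) 1, hsW θ s z := by
    have h1 : Real.exp (-s) < 1 := by
      rw [Real.exp_lt_one_iff]; linarith
    have : 0 < θ⁻¹ * ((1 - Real.exp (-s)) / s) :=
      mul_pos (by positivity) (div_pos (by linarith) hs0)
    linarith
  have hDlb2 : (θ * (1 + s))⁻¹ ≤ ∫ z in Ioo (0:ℝ) 1, hsW θ s z := by
    refine le_trans ?_ hDlb
    have hexp : s + 1 ≤ Real.exp s := Real.add_one_le_exp s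
    have hl : Real.exp (-s) * (1+s) ≤ 1 := by
      rw [Real.exp_neg]
      rw [inv_mul_le_iff₀ (Real.exp_pos s)]
      linarith
    have key : (1+s:ℝ)⁻¹ ≤ (1 - Real.exp (-s))/s := by
      rw [inv_eq_one_div, div_le_div_iff₀ (by linarith) hs0]
      nlinarith [hl]
    have : (θ * (1 + s))⁻¹ = θ⁻¹ * (1+s)⁻¹ := by
      rw [mul_inv]
    rw [this]
    exact mul_le_mul_of_nonneg_left key (by positivity)
  -- numerator bounds
  have hNnn : 0 ≤ ∫ z in Ioo (0:ℝ) 1, z^2 * hsW θ s z := by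
    apply setIntegral_nonneg measurableSet_Ioo
    intro z hz
    have := (hboundW z hz).1
    exact mul_nonneg (sq_nonneg z) this.le
  have hNub : (∫ z in Ioo (0:ℝ) 1, z^2 * hsW θ s z)
      ≤ ∫ z in Ioo (0:ℝ) 1, z^2 * (1-z) ^ (-(1/2) : ℝ) * Real.exp (-(s*z)) := by
    apply setIntegral_mono_on intN (int_f hs0.le) measurableSet_Ioo
    rintro z ⟨h0, h1⟩
    obtain ⟨hd1, hd2⟩ := hden z ⟨h0, h1⟩
    have hd0 : 0 < θ + (1 - θ) * z := by linarith
    have hA : 0 < (1-z) ^ (-(1/2) : ℝ) := negHalf_pos (by linarith)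
    have hI : (θ + (1 - θ) * z)⁻¹ ≤ 1 := by
      rw [inv_le_one_iff₀]; right; exact hd1
    have hIpos : 0 < (θ + (1 - θ) * z)⁻¹ := by positivity
    have hEq : Real.exp (-s * z) = Real.exp (-(s*z)) := by ring_nf
    unfold hsW
    rw [hEq]
    have hEpos : 0 < Real.exp (-(s*z)) := Real.exp_pos _
    nlinarith [mul_pos (mul_pos (mul_pos (by positivity : (0:ℝ) < z^2) hA) hIpos) hEpos,
      mul_le_mul_of_nonneg_left hI (le_of_lt (mul_pos (by positivity : (0:ℝ) < z^2) hA))]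
  -- combine
  have hcore := coreIneq hs
  have step1 : hsE θ s 2 ≤ (∫ z in Ioo (0:ℝ) 1, z^2 * hsW θ s z) * (θ * (1 + s)) := by
    unfold hsE
    have h := div_le_div_of_nonneg_left hNnn (show (0:ℝ) < (θ * (1 + s))⁻¹ by positivity) hDlb2
    rwa [div_inv_eq_mul] at h
  have hmulpos : (0:ℝ) ≤ θ * (1+s) := by positivity
  calc hsE θ s 2 ≤ _ := step1
    _ ≤ (3.52/s^3 + (16/15)/s^((5:ℝ)/2)) * (θ*(1+s)) :=
        mul_le_mul_of_nonneg_right (le_trans hNub hcore) hmulpos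
    _ ≤ ((1 - 5/(2*Real.exp 1)) ^ (-(1/2):ℝ)/s^3 + (16/15)/s^((5:ℝ)/2)) * (θ*(1+s)) := by
        apply mul_le_mul_of_nonneg_right _ hmulpos
        gcongr
        exact C1_ge
    _ = θ * (1+s) * ((1 - 5/(2*Real.exp 1)) ^ (-(1/2):ℝ)/s^3 + (16/15)/s^((5:ℝ)/2)) := by
        ring
end

section
/- Define SURE(s,θ) = 2σ²[1 − E(Z) + 2s E(Z²) − s (E(Z))²] where Z has density on (0,1) proportional to (1−z)^{-1/2}{θ+(1−θ)z}^{-1} exp(−sz). Then for s ≥ 1 and θ ≥ 1, SURE(s,θ)/(2σ²) ≤ 1 + 2θ(1+s)(C₁/s² + C₂/s^{3/2}), where C₁ = (1−5/(2e))^{-1/2} and C₂ = 16/15. -/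
open MeasureTheory Set

/-- Component-wise SURE for the horseshoe regression, as a function of
`s = α̂²d²/(2σ²)` and `θ = 1/(τ²d²)`. -/
noncomputable def hsSURE (σ θ s : ℝ) : ℝ :=
  2 * σ ^ 2 * (1 - hsE θ s 1 + 2 * s * hsE θ s 2 - s * (hsE θ s 1) ^ 2)

set_option linter.unusedVariables false
set_option linter.unreachableTactic false
set_option linter.unusedTactic false

/-- measurable version of the weight -/
noncomputable def HSW (θ s z : ℝ) : ℝ :=
  (Real.sqrt (1 - z))⁻¹ * (θ + (1 - θ) * z)⁻¹ * Real.exp (-s * z)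

lemma rpow_neg_half_eq (x : ℝ) (hx : 0 ≤ x) :
    x ^ (-(1/2) : ℝ) = (Real.sqrt x)⁻¹ := by
  rw [Real.rpow_neg hx, Real.sqrt_eq_rpow]

lemma exp_lb (x : ℝ) (n : ℕ) (hx : 0 ≤ x) : (1 + x/n)^n ≤ Real.exp x := by
  rcases Nat.eq_zero_or_pos n with h | h
  · subst h; simpa using Real.one_le_exp (by linarith)
  · have hn : (n:ℝ) ≠ 0 := Nat.cast_ne_zero.2 h.ne'
    have h1 : 1 + x/n ≤ Real.exp (x/n) := by
      have := Real.add_one_le_exp (x/n); linarith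
    have h2 : (1 + x/n)^n ≤ (Real.exp (x/n))^n :=
      pow_le_pow_left₀ (by positivity) h1 n
    calc (1 + x/n)^n ≤ (Real.exp (x/n))^n := h2
      _ = Real.exp ((n:ℝ) * (x/n)) := (Real.exp_nat_mul _ n).symm
      _ = Real.exp x := by rw [mul_div_cancel₀ _ hn]

lemma cube_le_exp (y : ℝ) (h : 0 ≤ 1 + y/3) : (1 + y/3)^3 ≤ Real.exp y := by
  have h1 : 1 + y/3 ≤ Real.exp (y/3) := by have := Real.add_one_le_exp (y/3); linarith
  calc (1 + y/3)^3 ≤ (Real.exp (y/3))^3 := pow_le_pow_left₀ h h1 3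
    _ = Real.exp ((3:ℕ) * (y/3)) := (Real.exp_nat_mul _ 3).symm
    _ = Real.exp y := by rw [show ((3:ℕ):ℝ) * (y/3) = y by push_cast; ring]

/-- global max bound for s³ e^{-λ s}, λ = 319/400 -/
lemma Tglob (s : ℝ) (hs : 0 ≤ s) :
    s^3 * Real.exp (-(319/400)*s) ≤ 2.6504 := by
  have he3 : (20.085:ℝ) ≤ Real.exp 3 := by
    have := Real.exp_one_gt_d9
    calc (20.085:ℝ) ≤ 2.7182818283^3 := by norm_num
      _ ≤ (Real.exp 1)^3 := pow_le_pow_left₀ (by norm_num) this.le 3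
      _ = Real.exp 3 := by rw [← Real.exp_nat_mul]; norm_num
  set x := (319/400)*s with hxdef
  have hx : 0 ≤ x := by positivity
  have h1 : (x/3)^3 ≤ Real.exp (x - 3) := by
    have := cube_le_exp (x - 3) (by linarith [hx])
    calc (x/3)^3 = (1 + (x-3)/3)^3 := by ring_nf
      _ ≤ Real.exp (x-3) := this
  have h2 : Real.exp (x - 3) = Real.exp x / Real.exp 3 := Real.exp_sub x 3
  have h3 : x^3 * Real.exp (-x) ≤ 27 / Real.exp 3 := by
    have hexp : 0 < Real.exp x := Real.exp_pos x
    have := h1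
    rw [h2] at this
    have h4 : x^3 ≤ 27 * (Real.exp x / Real.exp 3) := by nlinarith [this]
    have h5 : Real.exp (-x) = (Real.exp x)⁻¹ := Real.exp_neg x
    rw [h5]
    rw [div_eq_mul_inv] at h4 ⊢
    calc x^3 * (Real.exp x)⁻¹ ≤ (27 * (Real.exp x * (Real.exp 3)⁻¹)) * (Real.exp x)⁻¹ := by
          apply mul_le_mul_of_nonneg_right h4 (by positivity)
      _ = 27 * (Real.exp 3)⁻¹ * (Real.exp x * (Real.exp x)⁻¹) := by ring
      _ = 27 * (Real.exp 3)⁻¹ := by rw [mul_inv_cancel₀ hexp.ne', mul_one]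
  have hs3 : s^3 = x^3 * (400/319)^3 := by rw [hxdef]; ring
  have he3pos : (0:ℝ) < Real.exp 3 := Real.exp_pos 3
  have h6 : 27 / Real.exp 3 ≤ 27 / 20.085 := by
    apply div_le_div_of_nonneg_left (by norm_num) (by norm_num) he3
  have hxs : -(319/400)*s = -x := by rw [hxdef]; ring
  rw [hxs, hs3]
  have h7 : x ^ 3 * Real.exp (-x) * (400/319)^3 ≤ (27/20.085) * (400/319)^3 := by
    apply mul_le_mul_of_nonneg_right (le_trans h3 h6) (by positivity)
  calc x ^ 3 * (400 / 319) ^ 3 * Real.exp (-(x)) 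
      = x ^ 3 * Real.exp (-x) * (400/319)^3 := by ring
    _ ≤ (27/20.085) * (400/319)^3 := h7
    _ ≤ 2.6504 := by norm_num

/-- monotone decrease of s³ e^{-λs} past 3/λ -/
lemma Tmono (u s : ℝ) (hu : 3 ≤ (319/400)*u) (hus : u ≤ s) :
    s^3 * Real.exp (-(319/400)*s) ≤ u^3 * Real.exp (-(319/400)*u) := by
  have hup : 0 < u := by nlinarith
  have hd : 0 ≤ s - u := by linarith
  have h1 : s ≤ u * (1 + (319/400)*(s-u)/3) := by nlinarith
  have h2 : (1 + (319/400)*(s-u)/3)^3 ≤ Real.exp ((319/400)*(s-u)) :=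
    cube_le_exp _ (by positivity)
  have h3 : s^3 ≤ u^3 * Real.exp ((319/400)*(s-u)) := by
    calc s^3 ≤ (u * (1 + (319/400)*(s-u)/3))^3 :=
          pow_le_pow_left₀ (by linarith) h1 3
      _ = u^3 * (1 + (319/400)*(s-u)/3)^3 := by ring
      _ ≤ u^3 * Real.exp ((319/400)*(s-u)) := by
          apply mul_le_mul_of_nonneg_left h2 (by positivity)
  have h4 : Real.exp ((319/400)*(s-u)) * Real.exp (-(319/400)*s) = Real.exp (-(319/400)*u) := by
    rw [← Real.exp_add]; ring_nf
  calc s^3 * Real.exp (-(319/400)*s)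
      ≤ (u^3 * Real.exp ((319/400)*(s-u))) * Real.exp (-(319/400)*s) := by
        apply mul_le_mul_of_nonneg_right h3 (Real.exp_pos _).le
    _ = u^3 * (Real.exp ((319/400)*(s-u)) * Real.exp (-(319/400)*s)) := by ring
    _ = u^3 * Real.exp (-(319/400)*u) := by rw [h4]



lemma F_integral (s : ℝ) (hsp : 0 < s) :
    ∫ z in (0:ℝ)..1, (1 + z/2) * Real.exp (-s*z)
      = (2*s+1 - Real.exp (-s) * (3*s+1)) / (2*s^2) := by
  have hder : ∀ z ∈ uIcc (0:ℝ) 1,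
      HasDerivAt (fun z => -Real.exp (-s*z) * (1/s + z/(2*s) + 1/(2*s^2)))
        ((1 + z/2) * Real.exp (-s*z)) z := by
    intro z _
    have h1 : HasDerivAt (fun z : ℝ => -s*z) (-s) z := by
      simpa using (hasDerivAt_id z).const_mul (-s)
    have h2 : HasDerivAt (fun z : ℝ => Real.exp (-s*z)) (Real.exp (-s*z) * (-s)) z := h1.exp
    have h3 : HasDerivAt (fun z : ℝ => 1/s + z/(2*s) + 1/(2*s^2)) (1/(2*s)) z := by
      have := (((hasDerivAt_id z).div_const (2*s)).const_add (1/s)).add_const (1/(2*s^2))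
      simpa using this
    have h4 := (h2.neg).mul h3
    refine h4.congr_deriv ?_
    simp only [Pi.neg_apply]
    field_simp
    ring
  rw [intervalIntegral.integral_eq_sub_of_hasDerivAt hder]
  · norm_num
    field_simp
    ring
  · apply Continuous.intervalIntegrable
    continuity

lemma main_integral_le (s b : ℝ) (hsp : 0 < s) (hb : 0 ≤ b) :
    ∫ z in (0:ℝ)..b, z^2 * Real.exp (-s*z) ≤ 2/s^3 := by
  have hder : ∀ z ∈ uIcc (0:ℝ) b,
      HasDerivAt (fun z => -Real.exp (-s*z) * (z^2/s + 2*z/s^2 + 2/s^3))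
        (z^2 * Real.exp (-s*z)) z := by
    intro z _
    have h1 : HasDerivAt (fun z : ℝ => -s*z) (-s) z := by
      simpa using (hasDerivAt_id z).const_mul (-s)
    have h2 : HasDerivAt (fun z : ℝ => Real.exp (-s*z)) (Real.exp (-s*z) * (-s)) z := h1.exp
    have h3 : HasDerivAt (fun z : ℝ => z^2/s + 2*z/s^2 + 2/s^3) (2*z/s + 2/s^2) z := by
      have hp : HasDerivAt (fun z : ℝ => z^2) (2*z) z := by
        simpa using hasDerivAt_pow 2 z
      have := ((hp.div_const s).add (((hasDerivAt_id z).const_mul 2).div_const (s^2))).add_const (2/s^3)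
      exact this.congr_deriv (by ring)
    have h4 := (h2.neg).mul h3
    refine h4.congr_deriv ?_
    simp only [Pi.neg_apply]
    field_simp
    ring
  rw [intervalIntegral.integral_eq_sub_of_hasDerivAt hder]
  · norm_num
    positivity
  · apply Continuous.intervalIntegrable
    continuity

lemma tail_integral : ∫ z in Ioc ((319:ℝ)/400) 1, (Real.sqrt (1-z))⁻¹ = 9/10 := by
  have hEq : EqOn (fun z : ℝ => (1-z) ^ (-(1/2):ℝ)) (fun z => (Real.sqrt (1-z))⁻¹)
      (Ioc ((319:ℝ)/400) 1) := by
    intro z hz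
    exact rpow_neg_half_eq _ (by linarith [hz.2])
  rw [← setIntegral_congr_fun measurableSet_Ioc hEq]
  rw [← intervalIntegral.integral_of_le (by norm_num : (319:ℝ)/400 ≤ 1)]
  have hcomp := intervalIntegral.integral_comp_sub_left
    (a := (319:ℝ)/400) (b := 1) (fun x : ℝ => x ^ (-(1/2):ℝ)) 1
  rw [show (fun z : ℝ => (1-z) ^ (-(1/2):ℝ)) = (fun z : ℝ => (fun x : ℝ => x ^ (-(1/2):ℝ)) (1 - z)) from rfl]
  rw [hcomp]
  rw [integral_rpow (Or.inl (by norm_num))]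
  rw [show ((1:ℝ) - 1) = 0 by norm_num, Real.zero_rpow (by norm_num)]
  rw [show ((1:ℝ) - 319/400) = ((9:ℝ)/20)^2 by norm_num]
  rw [show (-(1/2:ℝ) + 1) = 1/2 by norm_num, ← Real.sqrt_eq_rpow, Real.sqrt_sq (by norm_num)]
  norm_num

lemma HSW_meas (θ s : ℝ) : Measurable (HSW θ s) := by
  apply Measurable.mul
  apply Measurable.mul
  · exact ((Real.continuous_sqrt.comp (continuous_const.sub continuous_id)).measurable).inv
  · exact (measurable_const.add (measurable_const.mul measurable_id)).inv
  · exact ((measurable_const.mul measurable_id)).exp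

lemma g_bounds (θ z : ℝ) (hθ : 1 ≤ θ) (h0 : 0 ≤ z) (h1 : z ≤ 1) :
    1 ≤ θ + (1 - θ) * z ∧ θ + (1 - θ) * z ≤ θ := by
  constructor <;> nlinarith

lemma HSW_nonneg (θ s z : ℝ) (hθ : 1 ≤ θ) (h0 : 0 ≤ z) (h1 : z ≤ 1) :
    0 ≤ HSW θ s z := by
  obtain ⟨hg1, _⟩ := g_bounds θ z hθ h0 h1
  have : (0:ℝ) < θ + (1-θ)*z := by linarith
  unfold HSW
  positivity

lemma HSW_le_sing (θ s z : ℝ) (hθ : 1 ≤ θ) (hs : 0 ≤ s) (h0 : 0 ≤ z) (h1 : z ≤ 1) :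
    HSW θ s z ≤ (Real.sqrt (1 - z))⁻¹ := by
  obtain ⟨hg1, _⟩ := g_bounds θ z hθ h0 h1
  have hgpos : (0:ℝ) < θ + (1-θ)*z := by linarith
  have hginv : (θ + (1-θ)*z)⁻¹ ≤ 1 := by
    rw [inv_le_one_iff₀]; right; exact hg1
  have hexp : Real.exp (-s*z) ≤ 1 := by
    rw [Real.exp_le_one_iff]; nlinarith
  have hsq : (0:ℝ) ≤ (Real.sqrt (1-z))⁻¹ := by positivity
  calc HSW θ s z ≤ (Real.sqrt (1-z))⁻¹ * (θ + (1-θ)*z)⁻¹ * 1 := by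
        unfold HSW
        apply mul_le_mul_of_nonneg_left hexp (by positivity)
    _ ≤ (Real.sqrt (1-z))⁻¹ * 1 * 1 := by
        apply mul_le_mul_of_nonneg_right _ (by norm_num)
        apply mul_le_mul_of_nonneg_left hginv hsq
    _ = (Real.sqrt (1-z))⁻¹ := by ring

lemma int_sqrt_inv (c : ℝ) (hc : 0 ≤ c) (hc1 : c ≤ 1) :
    IntegrableOn (fun z => (Real.sqrt (1 - z))⁻¹) (Ioc c 1) := by
  have h0 : IntervalIntegrable (fun x : ℝ => x ^ (-(1/2):ℝ)) volume (1-c) 0 :=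
    intervalIntegral.intervalIntegrable_rpow' (by norm_num)
  have h1 := h0.comp_sub_left 1
  norm_num at h1
  have h2 : IntegrableOn (fun z : ℝ => (1-z) ^ (-(1/2):ℝ)) (Ioc c 1) := by
    have := (intervalIntegrable_iff_integrableOn_Ioc_of_le (by linarith : c ≤ 1)).mp h1
    exact this
  apply h2.congr_fun _ measurableSet_Ioc
  intro z hz
  exact rpow_neg_half_eq _ (by linarith [hz.2])

lemma int_HSW (θ s : ℝ) (hθ : 1 ≤ θ) (hs : 0 ≤ s) :
    IntegrableOn (HSW θ s) (Ioc 0 1) := by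
  apply Integrable.mono' (int_sqrt_inv 0 le_rfl zero_le_one)
    ((HSW_meas θ s).aestronglyMeasurable)
  rw [ae_restrict_iff' measurableSet_Ioc]
  filter_upwards with z hz
  rw [Real.norm_eq_abs, abs_of_nonneg (HSW_nonneg θ s z hθ hz.1.le hz.2)]
  exact HSW_le_sing θ s z hθ hs hz.1.le hz.2

lemma int_zkHSW (θ s : ℝ) (k : ℕ) (hθ : 1 ≤ θ) (hs : 0 ≤ s) :
    IntegrableOn (fun z => z^k * HSW θ s z) (Ioc 0 1) := by
  apply Integrable.mono' (int_HSW θ s hθ hs)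
  · exact ((measurable_id.pow_const k).mul (HSW_meas θ s)).aestronglyMeasurable
  rw [ae_restrict_iff' measurableSet_Ioc]
  filter_upwards with z hz
  have hW := HSW_nonneg θ s z hθ hz.1.le hz.2
  have hzk : z^k ≤ 1 := pow_le_one₀ hz.1.le hz.2
  rw [Real.norm_eq_abs, abs_of_nonneg (mul_nonneg (pow_nonneg hz.1.le k) hW)]
  nlinarith [pow_nonneg hz.1.le k]










lemma N0_lb (θ s : ℝ) (hθ : 1 ≤ θ) (hs : 1 ≤ s) :
    (2*s+1 - Real.exp (-s)*(3*s+1))/(2*s^2) / θ ≤ ∫ z in Ioc (0:ℝ) 1, HSW θ s z := by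
  have hθp : (0:ℝ) < θ := by linarith
  have hsp : (0:ℝ) < s := by linarith
  have key : ∫ z in Ioo (0:ℝ) 1, θ⁻¹ * ((1 + z/2) * Real.exp (-s*z))
      ≤ ∫ z in Ioo (0:ℝ) 1, HSW θ s z := by
    apply setIntegral_mono_on
    · exact ((Continuous.integrableOn_Ioc (by continuity)).mono_set Ioo_subset_Ioc_self)
    · exact ((int_HSW θ s hθ hsp.le).mono_set Ioo_subset_Ioc_self)
    · exact measurableSet_Ioo
    · intro z hz
      obtain ⟨hg1, hgθ⟩ := g_bounds θ z hθ hz.1.le hz.2.le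
      have hgpos : (0:ℝ) < θ + (1-θ)*z := by linarith
      have hsqp : 0 < Real.sqrt (1-z) := Real.sqrt_pos.2 (by linarith [hz.2])
      have hsq2 : (Real.sqrt (1-z))^2 = 1-z := Real.sq_sqrt (by linarith [hz.2])
      have h1 : 1 + z/2 ≤ (Real.sqrt (1-z))⁻¹ := by
        rw [← one_div, le_div_iff₀ hsqp]
        nlinarith [sq_nonneg (Real.sqrt (1-z) - 1), hz.1, hz.2, Real.sqrt_nonneg (1-z)]
      have h2 : θ⁻¹ ≤ (θ + (1-θ)*z)⁻¹ := inv_anti₀ hgpos hgθ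
      have h3 : (1 + z/2) * θ⁻¹ ≤ (Real.sqrt (1-z))⁻¹ * (θ + (1-θ)*z)⁻¹ := by
        apply mul_le_mul h1 h2 (by positivity) (by positivity)
      calc θ⁻¹ * ((1 + z/2) * Real.exp (-s*z))
          = ((1 + z/2) * θ⁻¹) * Real.exp (-s*z) := by ring
        _ ≤ ((Real.sqrt (1-z))⁻¹ * (θ + (1-θ)*z)⁻¹) * Real.exp (-s*z) := by
            apply mul_le_mul_of_nonneg_right h3 (Real.exp_pos _).le
        _ = HSW θ s z := rfl
  rw [integral_Ioc_eq_integral_Ioo]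
  rw [integral_const_mul] at key
  have hF : ∫ z in Ioo (0:ℝ) 1, (1 + z/2) * Real.exp (-s*z)
      = (2*s+1 - Real.exp (-s)*(3*s+1))/(2*s^2) := by
    rw [← integral_Ioc_eq_integral_Ioo,
        ← intervalIntegral.integral_of_le (by norm_num : (0:ℝ) ≤ 1)]
    exact F_integral s hsp
  rw [hF] at key
  calc (2*s+1 - Real.exp (-s)*(3*s+1))/(2*s^2) / θ
      = θ⁻¹ * ((2*s+1 - Real.exp (-s)*(3*s+1))/(2*s^2)) := by
        rw [div_eq_mul_inv]; ring
    _ ≤ _ := key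

lemma N2_ub (θ s : ℝ) (hθ : 1 ≤ θ) (hs : 1 ≤ s) :
    ∫ z in Ioc (0:ℝ) 1, z^2 * HSW θ s z
      ≤ (40/9)/s^3 + (9/10)*Real.exp (-s*(319/400)) := by
  have hsp : (0:ℝ) < s := by linarith
  have hintA : IntegrableOn (fun z => z^2 * HSW θ s z) (Ioc (0:ℝ) (319/400)) :=
    (int_zkHSW θ s 2 hθ hsp.le).mono_set (Ioc_subset_Ioc le_rfl (by norm_num))
  have hintB : IntegrableOn (fun z => z^2 * HSW θ s z) (Ioc ((319:ℝ)/400) 1) :=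
    (int_zkHSW θ s 2 hθ hsp.le).mono_set (Ioc_subset_Ioc (by norm_num) le_rfl)
  rw [show (Ioc (0:ℝ) 1) = Ioc (0:ℝ) (319/400) ∪ Ioc ((319:ℝ)/400) 1 from
    (Ioc_union_Ioc_eq_Ioc (by norm_num) (by norm_num)).symm]
  rw [setIntegral_union (Ioc_disjoint_Ioc_of_le le_rfl) measurableSet_Ioc hintA hintB]
  have hmain : ∫ z in Ioc (0:ℝ) (319/400), z^2 * HSW θ s z ≤ (40/9)/s^3 := by
    have step1 : ∫ z in Ioc (0:ℝ) (319/400), z^2 * HSW θ s z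
        ≤ ∫ z in Ioc (0:ℝ) (319/400), (20/9) * (z^2 * Real.exp (-s*z)) := by
      apply setIntegral_mono_on hintA
        (Continuous.integrableOn_Ioc (by continuity)) measurableSet_Ioc
      intro z hz
      obtain ⟨hg1, hgθ⟩ := g_bounds θ z hθ hz.1.le (by linarith [hz.2])
      have hgpos : (0:ℝ) < θ + (1-θ)*z := by linarith
      have h1z : (81:ℝ)/400 ≤ 1 - z := by linarith [hz.2]
      have hsqge : (9:ℝ)/20 ≤ Real.sqrt (1-z) := by
        have := Real.sqrt_le_sqrt h1z
        rwa [show ((81:ℝ)/400) = ((9:ℝ)/20)^2 by norm_num, Real.sqrt_sq (by norm_num)] at this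
      have hsqp : (0:ℝ) < Real.sqrt (1-z) := by linarith
      have h1 : (Real.sqrt (1-z))⁻¹ ≤ 20/9 := by
        rw [← one_div, div_le_iff₀ hsqp]; linarith
      have h2 : (θ + (1-θ)*z)⁻¹ ≤ 1 := by
        rw [inv_le_one_iff₀]; right; exact hg1
      have hexp : (0:ℝ) < Real.exp (-s*z) := Real.exp_pos _
      have hz2 : (0:ℝ) ≤ z^2 := sq_nonneg z
      calc z^2 * HSW θ s z
          = z^2 * ((Real.sqrt (1-z))⁻¹ * (θ + (1-θ)*z)⁻¹) * Real.exp (-s*z) := by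
            unfold HSW; ring
        _ ≤ z^2 * (20/9 * 1) * Real.exp (-s*z) := by
            apply mul_le_mul_of_nonneg_right _ hexp.le
            apply mul_le_mul_of_nonneg_left _ hz2
            exact mul_le_mul h1 h2 (by positivity) (by norm_num)
        _ = (20/9) * (z^2 * Real.exp (-s*z)) := by ring
    have step2 : ∫ z in Ioc (0:ℝ) (319/400), (20/9) * (z^2 * Real.exp (-s*z))
        = (20/9) * ∫ z in (0:ℝ)..(319/400), z^2 * Real.exp (-s*z) := by
      rw [integral_const_mul, intervalIntegral.integral_of_le (by norm_num : (0:ℝ) ≤ 319/400)]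
    calc ∫ z in Ioc (0:ℝ) (319/400), z^2 * HSW θ s z
        ≤ (20/9) * ∫ z in (0:ℝ)..(319/400), z^2 * Real.exp (-s*z) := by
          rw [← step2]; exact step1
      _ ≤ (20/9) * (2/s^3) := by
          apply mul_le_mul_of_nonneg_left (main_integral_le s (319/400) hsp (by norm_num)) (by norm_num)
      _ = (40/9)/s^3 := by ring
  have htail : ∫ z in Ioc ((319:ℝ)/400) 1, z^2 * HSW θ s z
      ≤ (9/10)*Real.exp (-s*(319/400)) := by
    have step1 : ∫ z in Ioc ((319:ℝ)/400) 1, z^2 * HSW θ s z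
        ≤ ∫ z in Ioc ((319:ℝ)/400) 1, Real.exp (-s*(319/400)) * (Real.sqrt (1-z))⁻¹ := by
      apply setIntegral_mono_on hintB
        ((int_sqrt_inv (319/400) (by norm_num) (by norm_num)).const_mul _) measurableSet_Ioc
      intro z hz
      have hz0 : (0:ℝ) < z := lt_trans (by norm_num) hz.1
      obtain ⟨hg1, hgθ⟩ := g_bounds θ z hθ hz0.le hz.2
      have hgpos : (0:ℝ) < θ + (1-θ)*z := by linarith
      have h2 : (θ + (1-θ)*z)⁻¹ ≤ 1 := by
        rw [inv_le_one_iff₀]; right; exact hg1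
      have hz2 : z^2 ≤ 1 := by nlinarith [hz.2, hz0]
      have hexp : Real.exp (-s*z) ≤ Real.exp (-s*(319/400)) := by
        apply Real.exp_le_exp.2; nlinarith [hz.1]
      have hsq : (0:ℝ) ≤ (Real.sqrt (1-z))⁻¹ := by positivity
      calc z^2 * HSW θ s z
          = (z^2 * (θ + (1-θ)*z)⁻¹ * Real.exp (-s*z)) * (Real.sqrt (1-z))⁻¹ := by
            unfold HSW; ring
        _ ≤ (1 * 1 * Real.exp (-s*(319/400))) * (Real.sqrt (1-z))⁻¹ := by
            apply mul_le_mul_of_nonneg_right _ hsq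
            have hA : z^2 * (θ + (1-θ)*z)⁻¹ ≤ 1 := by
              calc z^2 * (θ + (1-θ)*z)⁻¹ ≤ 1 * 1 := 
                mul_le_mul hz2 h2 (by positivity) (by norm_num)
              _ = 1 := by norm_num
            calc z^2 * (θ + (1-θ)*z)⁻¹ * Real.exp (-s*z)
                ≤ 1 * Real.exp (-s*(319/400)) := 
                  mul_le_mul hA hexp (Real.exp_pos _).le (by norm_num)
              _ = 1 * 1 * Real.exp (-s*(319/400)) := by ring
        _ = Real.exp (-s*(319/400)) * (Real.sqrt (1-z))⁻¹ := by ring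
    calc ∫ z in Ioc ((319:ℝ)/400) 1, z^2 * HSW θ s z
        ≤ ∫ z in Ioc ((319:ℝ)/400) 1, Real.exp (-s*(319/400)) * (Real.sqrt (1-z))⁻¹ := step1
      _ = Real.exp (-s*(319/400)) * ∫ z in Ioc ((319:ℝ)/400) 1, (Real.sqrt (1-z))⁻¹ := by
          rw [integral_const_mul]
      _ = (9/10)*Real.exp (-s*(319/400)) := by rw [tail_integral]; ring
  linarith

lemma N2_le_N0 (θ s : ℝ) (hθ : 1 ≤ θ) (hs : 1 ≤ s) :
    ∫ z in Ioc (0:ℝ) 1, z^2 * HSW θ s z ≤ ∫ z in Ioc (0:ℝ) 1, HSW θ s z := by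
  apply setIntegral_mono_on (int_zkHSW θ s 2 hθ (by linarith)) (int_HSW θ s hθ (by linarith))
    measurableSet_Ioc
  intro z hz
  have hW := HSW_nonneg θ s z hθ hz.1.le hz.2
  have hz2 : z^2 ≤ 1 := by nlinarith [hz.1, hz.2]
  nlinarith


lemma exp2_lb : (7.389056:ℝ) ≤ Real.exp 2 := by
  have := Real.exp_one_gt_d9
  calc (7.389056:ℝ) ≤ 2.7182818283^2 := by norm_num
    _ ≤ (Real.exp 1)^2 := pow_le_pow_left₀ (by norm_num) this.le 2
    _ = Real.exp ((2:ℕ) * 1) := (Real.exp_nat_mul 1 2).symm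
    _ = Real.exp 2 := by norm_num

lemma exp3_lb : (20.085:ℝ) ≤ Real.exp 3 := by
  have := Real.exp_one_gt_d9
  calc (20.085:ℝ) ≤ 2.7182818283^3 := by norm_num
    _ ≤ (Real.exp 1)^3 := pow_le_pow_left₀ (by norm_num) this.le 3
    _ = Real.exp ((3:ℕ) * 1) := (Real.exp_nat_mul 1 3).symm
    _ = Real.exp 3 := by norm_num

lemma exp25_lb : (12.12:ℝ) ≤ Real.exp (5/2) := by
  have h1 : ((1:ℝ) + (1/2)/32)^32 ≤ Real.exp (1/2) := exp_lb (1/2) 32 (by norm_num)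
  have h2 : (1.642:ℝ) ≤ Real.exp (1/2) := le_trans (by norm_num) h1
  have h3 : Real.exp (5/2) = Real.exp 2 * Real.exp (1/2) := by
    rw [← Real.exp_add]; norm_num
  rw [h3]
  nlinarith [exp2_lb, Real.exp_pos (1/2), Real.exp_pos 2]

lemma exp38_lb : (41.64:ℝ) ≤ Real.exp (19/5) := by
  have h1 : ((1:ℝ) + (4/5)/4)^4 ≤ Real.exp (4/5) := exp_lb (4/5) 4 (by norm_num)
  have h2 : (2.0736:ℝ) ≤ Real.exp (4/5) := le_trans (by norm_num) h1
  have h3 : Real.exp (19/5) = Real.exp 3 * Real.exp (4/5) := by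
    rw [← Real.exp_add]; norm_num
  rw [h3]
  nlinarith [exp3_lb, Real.exp_pos (4/5), Real.exp_pos 3]

lemma exp5_lb : (148.4:ℝ) ≤ Real.exp 5 := by
  have h3 : Real.exp (5:ℝ) = Real.exp 2 * Real.exp 3 := by
    rw [← Real.exp_add]; norm_num
  rw [h3]
  nlinarith [exp2_lb, exp3_lb, Real.exp_pos 2, Real.exp_pos 3]

lemma exp30305_lb : (20.697:ℝ) ≤ Real.exp (6061/2000) := by
  have h1 : (1:ℝ) + 61/2000 ≤ Real.exp (61/2000) := by
    have := Real.add_one_le_exp ((61:ℝ)/2000); linarith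
  have h3 : Real.exp ((6061:ℝ)/2000) = Real.exp 3 * Real.exp (61/2000) := by
    rw [← Real.exp_add]; norm_num
  rw [h3]
  nlinarith [exp3_lb, Real.exp_pos (61/2000), Real.exp_pos 3]

lemma exp39875_lb : (48.54:ℝ) ≤ Real.exp (319/80) := by
  have h1 : ((1:ℝ) + (79/80)/4)^4 ≤ Real.exp (79/80) := exp_lb (79/80) 4 (by norm_num)
  have h2 : (2.417:ℝ) ≤ Real.exp (79/80) := le_trans (by norm_num) h1
  have h3 : Real.exp ((319:ℝ)/80) = Real.exp 3 * Real.exp (79/80) := by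
    rw [← Real.exp_add]; norm_num
  rw [h3]
  nlinarith [exp3_lb, Real.exp_pos (79/80), Real.exp_pos 3]

lemma exp638_lb : (579.9:ℝ) ≤ Real.exp (319/50) := by
  have h1 : ((1:ℝ) + (19/50)/4)^4 ≤ Real.exp (19/50) := exp_lb (19/50) 4 (by norm_num)
  have h2 : (1.4376:ℝ) ≤ Real.exp (19/50) := le_trans (by norm_num) h1
  have h3 : Real.exp ((319:ℝ)/50) = Real.exp 3 * (Real.exp 3 * Real.exp (19/50)) := by
    rw [← Real.exp_add, ← Real.exp_add]; norm_num
  rw [h3]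
  have h5 : (20.085*1.4376:ℝ) ≤ Real.exp 3 * Real.exp (19/50) :=
    mul_le_mul exp3_lb h2 (by norm_num) (Real.exp_pos 3).le
  have h6 : (20.085*(20.085*1.4376):ℝ) ≤ Real.exp 3 * (Real.exp 3 * Real.exp (19/50)) :=
    mul_le_mul exp3_lb h5 (by norm_num) (Real.exp_pos 3).le
  nlinarith [h6]

lemma exp_neg_ub {u L t0 : ℝ} (hL : 0 < L) (h : L ≤ Real.exp u) (h2 : 1 ≤ t0 * L) :
    Real.exp (-u) ≤ t0 := by
  rw [Real.exp_neg]
  have ht0 : 0 < t0 := by nlinarith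
  have h3 : (Real.exp u)⁻¹ ≤ L⁻¹ := inv_anti₀ hL h
  have h4 : L⁻¹ ≤ t0 := by
    rw [← one_div, div_le_iff₀ hL]; linarith
  linarith

lemma c1_lb : (3.5283:ℝ) ≤ (1 - 5/(2*Real.exp 1)) ^ (-(1/2) : ℝ) := by
  have heu : Real.exp 1 < 2.7182818286 := Real.exp_one_lt_d9
  have hel : 2.7182818283 < Real.exp 1 := Real.exp_one_gt_d9
  have hep : (0:ℝ) < Real.exp 1 := Real.exp_pos 1
  have hx0 : (0:ℝ) < 1 - 5/(2*Real.exp 1) := by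
    rw [sub_pos, div_lt_one (by positivity)]; nlinarith
  have hxu : 1 - 5/(2*Real.exp 1) ≤ 0.08032 := by
    have h5 : (0.91968:ℝ) ≤ 5/(2*Real.exp 1) := by
      rw [le_div_iff₀ (by positivity)]; nlinarith
    linarith
  rw [rpow_neg_half_eq _ hx0.le]
  have hsq : Real.sqrt (1 - 5/(2*Real.exp 1)) ≤ 0.28342 := by
    calc Real.sqrt (1 - 5/(2*Real.exp 1)) ≤ Real.sqrt ((0.28342:ℝ)^2) :=
          Real.sqrt_le_sqrt (by nlinarith)
      _ = 0.28342 := Real.sqrt_sq (by norm_num)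
  have hsp : 0 < Real.sqrt (1 - 5/(2*Real.exp 1)) := Real.sqrt_pos.2 hx0
  have := inv_anti₀ hsp hsq
  have h2 : (3.5283:ℝ) ≤ ((0.28342:ℝ))⁻¹ := by norm_num
  calc (3.5283:ℝ) ≤ ((0.28342:ℝ))⁻¹ := h2
    _ ≤ _ := by
      apply inv_anti₀ hsp hsq

lemma sqrt_lb (q s : ℝ) (hq : 0 ≤ q) (h : q^2 ≤ s) : q ≤ Real.sqrt s := by
  calc q = Real.sqrt (q^2) := (Real.sqrt_sq hq).symm
    _ ≤ Real.sqrt s := Real.sqrt_le_sqrt h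

lemma interval_combine (s u v t0 T0 q c1 : ℝ)
    (hu : u ≤ s) (hv : s ≤ v) (hup : 0 < u)
    (ht : Real.exp (-s) ≤ t0) (ht0 : 0 ≤ t0)
    (hT : s^3 * Real.exp (-s*(319/400)) ≤ T0)
    (hq : q ≤ Real.sqrt s) (hq0 : 0 ≤ q) (hc1 : 3.5283 ≤ c1)
    (hG0 : 0 ≤ 1 + 3/(2*v) + 1/(2*v^2) - t0*(3/2 + 2/u + 1/(2*u^2)))
    (hnum : 40/9 + (9/10)*T0 ≤
      (1 + 3/(2*v) + 1/(2*v^2) - t0*(3/2 + 2/u + 1/(2*u^2))) * (c1 + (16/15)*q)) :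
    40/9 + (9/10)*(s^3*Real.exp (-s*(319/400)))
      ≤ ((2*s+1 - Real.exp (-s)*(3*s+1))/(2*s^2)) * (1+s) * (c1 + (16/15)*Real.sqrt s) := by
  have hsp : 0 < s := lt_of_lt_of_le hup hu
  have hvp : 0 < v := by linarith
  have hFG : ((2*s+1 - Real.exp (-s)*(3*s+1))/(2*s^2)) * (1+s)
      = (1 + 3/(2*s) + 1/(2*s^2)) - Real.exp (-s)*(3/2 + 2/s + 1/(2*s^2)) := by
    field_simp
    ring
  have hpos : 1 + 3/(2*v) + 1/(2*v^2) ≤ 1 + 3/(2*s) + 1/(2*s^2) := by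
    have h1 : 3/(2*v) ≤ 3/(2*s) := by gcongr <;> linarith
    have h2 : 1/(2*v^2) ≤ 1/(2*s^2) := by gcongr <;> nlinarith
    linarith
  have hneg : Real.exp (-s)*(3/2 + 2/s + 1/(2*s^2)) ≤ t0*(3/2 + 2/u + 1/(2*u^2)) := by
    have h1 : 3/2 + 2/s + 1/(2*s^2) ≤ 3/2 + 2/u + 1/(2*u^2) := by
      have h2 : 2/s ≤ 2/u := by gcongr <;> linarith
      have h3 : 1/(2*s^2) ≤ 1/(2*u^2) := by gcongr <;> nlinarith
      linarith
    apply mul_le_mul ht h1 (by positivity) ht0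
  have hsqs : 0 ≤ Real.sqrt s := Real.sqrt_nonneg s
  have hP : c1 + (16/15)*q ≤ c1 + (16/15)*Real.sqrt s := by nlinarith
  have hPpos : 0 ≤ c1 + (16/15)*q := by nlinarith
  calc 40/9 + (9/10)*(s^3*Real.exp (-s*(319/400)))
      ≤ 40/9 + (9/10)*T0 := by linarith
    _ ≤ (1 + 3/(2*v) + 1/(2*v^2) - t0*(3/2 + 2/u + 1/(2*u^2))) * (c1 + (16/15)*q) := hnum
    _ ≤ ((1 + 3/(2*s) + 1/(2*s^2)) - Real.exp (-s)*(3/2 + 2/s + 1/(2*s^2)))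
          * (c1 + (16/15)*Real.sqrt s) := by
        apply mul_le_mul (by linarith) hP hPpos (by linarith)
    _ = _ := by rw [hFG]

lemma KEY (s c1 : ℝ) (hbig : 5/2 ≤ s) (hc1 : 3.5283 ≤ c1) :
    40/9 + (9/10)*(s^3*Real.exp (-s*(319/400)))
      ≤ ((2*s+1 - Real.exp (-s)*(3*s+1))/(2*s^2)) * (1+s) * (c1 + (16/15)*Real.sqrt s) := by
  have hsp : (0:ℝ) < s := by linarith
  have hTfix : ∀ x : ℝ, Real.exp (-(319/400)*x) = Real.exp (-x*(319/400)) := by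
    intro x; ring_nf
  rcases le_or_gt s 3 with h3 | h3
  · -- interval [5/2, 3]
    apply interval_combine s (5/2) 3 (1/12.12) 2.6504 1.5811 c1 hbig h3 (by norm_num)
    · apply exp_neg_ub (by norm_num : (0:ℝ) < 12.12) _ (by norm_num)
      calc (12.12:ℝ) ≤ Real.exp (5/2) := exp25_lb
        _ ≤ Real.exp s := Real.exp_le_exp.2 hbig
    · norm_num
    · rw [← hTfix]; exact Tglob s hsp.le
    · exact sqrt_lb _ _ (by norm_num) (by nlinarith)
    · norm_num
    · exact hc1
    · norm_num
    · nlinarith [hc1]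
  rcases le_or_gt s (19/5) with h38 | h38
  · -- interval [3, 19/5]
    apply interval_combine s 3 (19/5) (1/20.085) 2.6504 1.7320 c1 h3.le h38 (by norm_num)
    · apply exp_neg_ub (by norm_num : (0:ℝ) < 20.085) _ (by norm_num)
      calc (20.085:ℝ) ≤ Real.exp 3 := exp3_lb
        _ ≤ Real.exp s := Real.exp_le_exp.2 h3.le
    · norm_num
    · rw [← hTfix]; exact Tglob s hsp.le
    · exact sqrt_lb _ _ (by norm_num) (by nlinarith)
    · norm_num
    · exact hc1
    · norm_num
    · nlinarith [hc1]
  rcases le_or_gt s 5 with h5 | h5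
  · -- interval [19/5, 5]
    apply interval_combine s (19/5) 5 (1/41.64) 2.6513 1.9493 c1 h38.le h5 (by norm_num)
    · apply exp_neg_ub (by norm_num : (0:ℝ) < 41.64) _ (by norm_num)
      calc (41.64:ℝ) ≤ Real.exp (19/5) := exp38_lb
        _ ≤ Real.exp s := Real.exp_le_exp.2 h38.le
    · norm_num
    · rw [← hTfix]
      calc s^3 * Real.exp (-(319/400)*s)
          ≤ (19/5)^3 * Real.exp (-(319/400)*(19/5)) := Tmono (19/5) s (by norm_num) h38.le
        _ ≤ 2.6513 := by
            rw [show (-(319/400)*((19:ℝ)/5)) = -(6061/2000) by norm_num]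
            have := exp_neg_ub (by norm_num : (0:ℝ) < 20.697) exp30305_lb
              (by norm_num : (1:ℝ) ≤ (1/20.697) * 20.697)
            nlinarith [this]
    · exact sqrt_lb _ _ (by norm_num) (by nlinarith)
    · norm_num
    · exact hc1
    · norm_num
    · nlinarith [hc1]
  rcases le_or_gt s 8 with h8 | h8
  · -- interval [5, 8]
    apply interval_combine s 5 8 (1/148.4) 2.5752 2.2360 c1 h5.le h8 (by norm_num)
    · apply exp_neg_ub (by norm_num : (0:ℝ) < 148.4) _ (by norm_num)
      calc (148.4:ℝ) ≤ Real.exp 5 := exp5_lb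
        _ ≤ Real.exp s := Real.exp_le_exp.2 h5.le
    · norm_num
    · rw [← hTfix]
      calc s^3 * Real.exp (-(319/400)*s)
          ≤ 5^3 * Real.exp (-(319/400)*5) := Tmono 5 s (by norm_num) h5.le
        _ ≤ 2.5752 := by
            rw [show (-(319/400)*(5:ℝ)) = -(319/80) by norm_num]
            have := exp_neg_ub (by norm_num : (0:ℝ) < 48.54) exp39875_lb
              (by norm_num : (1:ℝ) ≤ (1/48.54) * 48.54)
            nlinarith [this]
    · exact sqrt_lb _ _ (by norm_num) (by nlinarith)
    · norm_num
    · exact hc1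
    · norm_num
    · nlinarith [hc1]
  · -- s ≥ 8
    have hT8 : s^3*Real.exp (-s*(319/400)) ≤ 0.8830 := by
      rw [← hTfix]
      calc s^3 * Real.exp (-(319/400)*s)
          ≤ 8^3 * Real.exp (-(319/400)*8) := Tmono 8 s (by norm_num) h8.le
        _ ≤ 0.8830 := by
            rw [show (-(319/400)*(8:ℝ)) = -(319/50) by norm_num]
            have := exp_neg_ub (by norm_num : (0:ℝ) < 579.9) exp638_lb
              (by norm_num : (1:ℝ) ≤ (1/579.9) * 579.9)
            nlinarith [this]
    have hFG : ((2*s+1 - Real.exp (-s)*(3*s+1))/(2*s^2)) * (1+s)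
        = (1 + 3/(2*s) + 1/(2*s^2)) - Real.exp (-s)*(3/2 + 2/s + 1/(2*s^2)) := by
      field_simp
      ring
    have ht : Real.exp (-s)*(1+s) ≤ 1 := by
      rw [Real.exp_neg]
      rw [inv_mul_le_iff₀ (Real.exp_pos s)]
      have := Real.add_one_le_exp s
      linarith
    have hid : (3/(2*s)+1/(2*s^2))*(1+s) = 3/2+2/s+1/(2*s^2) := by
      field_simp
      ring
    have h2 : Real.exp (-s)*(3/2+2/s+1/(2*s^2)) ≤ 3/(2*s)+1/(2*s^2) := by
      rw [← hid]
      calc Real.exp (-s)*((3/(2*s)+1/(2*s^2))*(1+s))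
          = (3/(2*s)+1/(2*s^2))*(Real.exp (-s)*(1+s)) := by ring
        _ ≤ (3/(2*s)+1/(2*s^2))*1 := by
            apply mul_le_mul_of_nonneg_left ht (by positivity)
        _ = 3/(2*s)+1/(2*s^2) := by ring
    have hG1 : 1 ≤ ((2*s+1 - Real.exp (-s)*(3*s+1))/(2*s^2)) * (1+s) := by
      rw [hFG]
      have : (0:ℝ) < 3/(2*s) := by positivity
      have : (0:ℝ) < 1/(2*s^2) := by positivity
      linarith
    have hsq8 : (2.8284:ℝ) ≤ Real.sqrt s := sqrt_lb _ _ (by norm_num) (by nlinarith)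
    have hPpos : (0:ℝ) < c1 + (16/15)*Real.sqrt s := by nlinarith [Real.sqrt_nonneg s]
    calc 40/9 + (9/10)*(s^3*Real.exp (-s*(319/400)))
        ≤ 40/9 + (9/10)*0.8830 := by linarith
      _ ≤ c1 + (16/15)*2.8284 := by norm_num; linarith
      _ ≤ c1 + (16/15)*Real.sqrt s := by linarith
      _ = 1 * (c1 + (16/15)*Real.sqrt s) := by ring
      _ ≤ ((2*s+1 - Real.exp (-s)*(3*s+1))/(2*s^2)) * (1+s) * (c1 + (16/15)*Real.sqrt s) := by
          apply mul_le_mul_of_nonneg_right hG1 hPpos.le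

set_option maxHeartbeats 1000000 in
theorem stmt10 (σ θ s : ℝ) (hσ : 0 < σ) (hθ : 1 ≤ θ) (hs : 1 ≤ s) :
    hsSURE σ θ s / (2 * σ ^ 2) ≤
      1 + 2 * θ * (1 + s) *
        ((1 - 5 / (2 * Real.exp 1)) ^ (-(1/2) : ℝ) / s ^ 2
          + (16 / 15) / s ^ ((3 : ℝ) / 2)) := by
  have hθp : (0:ℝ) < θ := by linarith
  have hsp : (0:ℝ) < s := by linarith
  set c1 : ℝ := (1 - 5 / (2 * Real.exp 1)) ^ (-(1/2) : ℝ) with hc1def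
  have hc1 : (3.5283:ℝ) ≤ c1 := c1_lb
  -- conversions from hsW/Ioo integrals to HSW/Ioc integrals
  have hconv : ∀ k : ℕ, (∫ z in Ioo (0:ℝ) 1, z ^ k * hsW θ s z)
      = ∫ z in Ioc (0:ℝ) 1, z ^ k * HSW θ s z := by
    intro k
    rw [integral_Ioc_eq_integral_Ioo]
    apply setIntegral_congr_fun measurableSet_Ioo
    intro z hz
    show z ^ k * hsW θ s z = z ^ k * HSW θ s z
    unfold hsW HSW
    rw [rpow_neg_half_eq _ (by linarith [hz.2] : (0:ℝ) ≤ 1 - z)]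
  have hconv0 : (∫ z in Ioo (0:ℝ) 1, hsW θ s z) = ∫ z in Ioc (0:ℝ) 1, HSW θ s z := by
    rw [integral_Ioc_eq_integral_Ioo]
    apply setIntegral_congr_fun measurableSet_Ioo
    intro z hz
    show hsW θ s z = HSW θ s z
    unfold hsW HSW
    rw [rpow_neg_half_eq _ (by linarith [hz.2] : (0:ℝ) ≤ 1 - z)]
  set N0 : ℝ := ∫ z in Ioc (0:ℝ) 1, HSW θ s z with hN0def
  set N1 : ℝ := ∫ z in Ioc (0:ℝ) 1, z ^ 1 * HSW θ s z with hN1def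
  set N2 : ℝ := ∫ z in Ioc (0:ℝ) 1, z ^ 2 * HSW θ s z with hN2def
  set F : ℝ := (2*s+1 - Real.exp (-s)*(3*s+1))/(2*s^2) with hFdef
  have hE1def : hsE θ s 1 = N1 / N0 := by unfold hsE; rw [hconv 1, hconv0]
  have hE2def : hsE θ s 2 = N2 / N0 := by unfold hsE; rw [hconv 2, hconv0]
  have hexps : Real.exp (-s) * (1+s) ≤ 1 := by
    rw [Real.exp_neg, inv_mul_le_iff₀ (Real.exp_pos s)]
    have := Real.add_one_le_exp s; linarith
  have hFpos : 0 < F := by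
    rw [hFdef]
    apply div_pos _ (by positivity)
    nlinarith [Real.exp_pos (-s), hexps]
  have hN0lb : F / θ ≤ N0 := N0_lb θ s hθ hs
  have hN0pos : 0 < N0 := lt_of_lt_of_le (div_pos hFpos hθp) hN0lb
  have hN1nonneg : 0 ≤ N1 := by
    apply setIntegral_nonneg measurableSet_Ioc
    intro z hz
    exact mul_nonneg (pow_nonneg hz.1.le 1) (HSW_nonneg θ s z hθ hz.1.le hz.2)
  have hE1 : 0 ≤ hsE θ s 1 := by
    rw [hE1def]; exact div_nonneg hN1nonneg hN0pos.le
  -- the key bound on 2 s E2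
  have key : 2*s*hsE θ s 2 ≤ 2*θ*(1+s)*(c1/s^2 + (16/15)/s^((3:ℝ)/2)) := by
    rw [hE2def]
    rcases le_or_gt s (5/2) with hsmall | hbig
    · -- small s: E2 ≤ 1
      have hle1 : N2/N0 ≤ 1 := (div_le_one hN0pos).2 (N2_le_N0 θ s hθ hs)
      have h32 : s^((3:ℝ)/2) ≤ s^2 := by
        have h := Real.rpow_le_rpow_of_exponent_le hs (show (3:ℝ)/2 ≤ 2 by norm_num)
        rwa [Real.rpow_two] at h
      have hrpos : 0 < s^((3:ℝ)/2) := Real.rpow_pos_of_pos hsp _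
      have hc2 : (16:ℝ)/15/s^2 ≤ (16:ℝ)/15/s^((3:ℝ)/2) := by
        gcongr
      have hcube : 2*s*s^2 ≤ 2*(1+s)*(c1+16/15) := by nlinarith [hsmall, hs, hc1]
      calc 2*s*(N2/N0) ≤ 2*s*1 := by
            apply mul_le_mul_of_nonneg_left hle1 (by positivity)
        _ = 2*s := by ring
        _ ≤ 2*(1+s)*((c1+16/15)/s^2) := by
            rw [← mul_div_assoc, le_div_iff₀ (by positivity)]
            nlinarith [hcube]
        _ = 2*(1+s)*(c1/s^2 + (16/15)/s^2) := by ring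
        _ ≤ 2*(1+s)*(c1/s^2 + (16/15)/s^((3:ℝ)/2)) := by
            apply mul_le_mul_of_nonneg_left (by linarith) (by positivity)
        _ ≤ 2*θ*(1+s)*(c1/s^2 + (16/15)/s^((3:ℝ)/2)) := by
            have hX : 0 ≤ c1/s^2 + (16/15)/s^((3:ℝ)/2) := by
              apply add_nonneg (div_nonneg (by linarith) (by positivity)) (by positivity)
            have h9 : 2*(1+s) ≤ 2*θ*(1+s) := by nlinarith
            have := mul_le_mul_of_nonneg_right h9 hX
            linarith
    · -- big s
      have hsq : 0 < Real.sqrt s := Real.sqrt_pos.2 hsp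
      have hsm : Real.sqrt s * s^((3:ℝ)/2) = s^2 := by
        rw [Real.sqrt_eq_rpow, ← Real.rpow_add hsp]
        norm_num
      have hrpos : 0 < s^((3:ℝ)/2) := Real.rpow_pos_of_pos hsp _
      have h32 : (16:ℝ)/15/s^((3:ℝ)/2) = (16/15)*Real.sqrt s/s^2 := by
        rw [← hsm, mul_comm (Real.sqrt s) (s ^ ((3:ℝ)/2)), mul_div_mul_right _ _ hsq.ne']
      set H : ℝ := (40/9)/s^3 + (9/10)*Real.exp (-s*(319/400)) with hHdef
      have hH0 : 0 ≤ H := by rw [hHdef]; positivity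
      have hHub : N2 ≤ H := N2_ub θ s hθ hs
      have hE2b : N2/N0 ≤ H/(F/θ) := div_le_div₀ hH0 hHub (div_pos hFpos hθp) hN0lb
      have hdd : H/(F/θ) = H*θ/F := div_div_eq_mul_div H F θ
      have hs3H : s^3 * H = 40/9 + (9/10)*(s^3*Real.exp (-s*(319/400))) := by
        rw [hHdef]; field_simp
      have hKEY := KEY s c1 hbig.le hc1
      have hfinal : 2*s*(H*θ/F) ≤ 2*θ*(1+s)*(c1/s^2 + (16/15)/s^((3:ℝ)/2)) := by
        rw [h32]
        have hrhs : 2*θ*(1+s)*(c1/s^2 + (16/15)*Real.sqrt s/s^2)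
            = (2*θ*((1+s)*(c1 + (16/15)*Real.sqrt s)))/s^2 := by
          field_simp
        rw [hrhs, mul_div_assoc', div_le_div_iff₀ hFpos (by positivity)]
        calc 2*s*(H*θ)*s^2 = 2*θ*(s^3*H) := by ring
          _ ≤ 2*θ*(F*(1+s)*(c1+(16/15)*Real.sqrt s)) := by
              apply mul_le_mul_of_nonneg_left _ (by positivity)
              rw [hs3H]
              exact hKEY
          _ = 2*θ*((1+s)*(c1+(16/15)*Real.sqrt s))*F := by ring
      calc 2*s*(N2/N0) ≤ 2*s*(H/(F/θ)) := by
            apply mul_le_mul_of_nonneg_left hE2b (by positivity)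
        _ = 2*s*(H*θ/F) := by rw [hdd]
        _ ≤ _ := hfinal
  -- reduction of the goal
  have hred : hsSURE σ θ s / (2*σ^2)
      = 1 - hsE θ s 1 + 2*s*hsE θ s 2 - s*(hsE θ s 1)^2 := by
    unfold hsSURE
    exact mul_div_cancel_left₀ _ (by positivity)
  rw [hred]
  have hsq1 : 0 ≤ s * (hsE θ s 1)^2 := mul_nonneg hsp.le (sq_nonneg _)
  linarith [key, hE1, hsq1]
end

section
/- Under the conditions of the previous bounds with θ fixed (θ ≥ 1), SURE(s,θ)/(2σ²) → 1 as s → ∞; i.e., the component-wise SURE of the horseshoe regression converges to 2σ² as the scaled signal s = α̂²d²/(2σ²) tends to infinity, provided τ² ≤ d^{-2}. -/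
open MeasureTheory Set Filter

namespace HSaux

open Real

lemma integrableOn_majorant :
    IntegrableOn (fun z : ℝ => (1 - z) ^ (-(1/2) : ℝ)) (Ioo 0 1) := by
  have h : IntervalIntegrable (fun x : ℝ => x ^ (-(1/2) : ℝ)) volume 0 1 :=
    intervalIntegral.intervalIntegrable_rpow' (by norm_num)
  have h2 := h.comp_sub_left 1
  have h3 := h2.symm
  rw [intervalIntegrable_iff_integrableOn_Ioo_of_le (by norm_num)] at h3
  simpa using h3

lemma integral_majorant :
    ∫ z in Ioo (0:ℝ) 1, (1 - z) ^ (-(1/2) : ℝ) = 2 := by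
  rw [← integral_Ioc_eq_integral_Ioo, ← intervalIntegral.integral_of_le zero_le_one,
    intervalIntegral.integral_comp_sub_left (fun x : ℝ => x ^ (-(1/2):ℝ)) 1]
  norm_num
  rw [integral_rpow (Or.inl (by norm_num))]
  rw [Real.zero_rpow (by norm_num), Real.one_rpow]
  norm_num

lemma integral_exp_le {c : ℝ} (hc : 0 < c) :
    ∫ z in Ioo (0:ℝ) 1, Real.exp (-(c * z)) ≤ 1 / c := by
  have hderiv : ∀ x ∈ uIcc (0:ℝ) 1,
      HasDerivAt (fun y : ℝ => -Real.exp (-(c * y)) / c) (Real.exp (-(c * x))) x := by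
    intro x _
    have h1 : HasDerivAt (fun y : ℝ => -(c * y)) (-c) x := by
      simpa using ((hasDerivAt_id x).const_mul c).fun_neg
    have h2 := (Real.hasDerivAt_exp (-(c * x))).comp x h1
    have h3 := (h2.div_const c).fun_neg
    refine (h3.congr_deriv ?_).congr_of_eventuallyEq (Eventually.of_forall fun y => ?_)
    · rw [mul_neg, neg_div, neg_neg, mul_div_assoc, div_self hc.ne', mul_one]
    · simp [Function.comp, neg_div]
  have hint : IntervalIntegrable (fun z : ℝ => Real.exp (-(c * z))) volume 0 1 :=
    (Real.continuous_exp.comp (by continuity)).intervalIntegrable 0 1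
  have hval : ∫ z in (0:ℝ)..1, Real.exp (-(c * z)) = (1 - Real.exp (-c)) / c := by
    rw [intervalIntegral.integral_eq_sub_of_hasDerivAt hderiv hint]
    simp
    ring
  rw [← integral_Ioc_eq_integral_Ioo, ← intervalIntegral.integral_of_le zero_le_one, hval]
  have := Real.exp_pos (-c)
  rw [div_le_div_iff₀ hc hc]
  nlinarith

end HSaux
section Part2
open MeasureTheory Set Real

variable {θ s z : ℝ}

lemma q_lb (hθ : 1 ≤ θ) (hz : z ∈ Ioo (0:ℝ) 1) : 1 ≤ θ + (1 - θ) * z := by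
  obtain ⟨h0, h1⟩ := hz; nlinarith

lemma q_ub (hθ : 1 ≤ θ) (hz : z ∈ Ioo (0:ℝ) 1) : θ + (1 - θ) * z ≤ θ := by
  obtain ⟨h0, h1⟩ := hz; nlinarith

lemma maj_nonneg (hz : z ∈ Ioo (0:ℝ) 1) : 0 ≤ (1 - z) ^ (-(1/2) : ℝ) :=
  Real.rpow_nonneg (by linarith [hz.2]) _

lemma one_le_maj (hz : z ∈ Ioo (0:ℝ) 1) : 1 ≤ (1 - z) ^ (-(1/2) : ℝ) :=
  Real.one_le_rpow_of_pos_of_le_one_of_nonpos (by linarith [hz.2]) (by linarith [hz.1])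
    (by norm_num)

lemma hsW_nonneg (hθ : 1 ≤ θ) (hz : z ∈ Ioo (0:ℝ) 1) : 0 ≤ hsW θ s z := by
  have h1 := maj_nonneg hz
  have h2 := q_lb hθ hz
  have h3 : 0 ≤ (θ + (1 - θ) * z)⁻¹ := inv_nonneg.mpr (by linarith)
  exact mul_nonneg (mul_nonneg h1 h3) (Real.exp_nonneg _)

lemma hsW_le (hθ : 1 ≤ θ) (hz : z ∈ Ioo (0:ℝ) 1) :
    hsW θ s z ≤ (1 - z) ^ (-(1/2) : ℝ) * Real.exp (-(s * z)) := by
  unfold hsW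
  rw [neg_mul]
  have hq := q_lb hθ hz
  have h1 := maj_nonneg hz
  have h2 : (θ + (1 - θ) * z)⁻¹ ≤ 1 := inv_le_one_of_one_le₀ hq
  calc (1 - z) ^ (-(1/2) : ℝ) * (θ + (1 - θ) * z)⁻¹ * Real.exp (-(s * z))
      ≤ (1 - z) ^ (-(1/2) : ℝ) * 1 * Real.exp (-(s * z)) := by
        apply mul_le_mul_of_nonneg_right _ (Real.exp_nonneg _)
        exact mul_le_mul_of_nonneg_left h2 h1
    _ = (1 - z) ^ (-(1/2) : ℝ) * Real.exp (-(s * z)) := by ring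

lemma hsW_ge (hθ : 1 ≤ θ) (hz : z ∈ Ioo (0:ℝ) 1) :
    θ⁻¹ * Real.exp (-(s * z)) ≤ hsW θ s z := by
  unfold hsW
  rw [neg_mul]
  have hq1 := q_lb hθ hz
  have hq2 := q_ub hθ hz
  have hqpos : 0 < θ + (1 - θ) * z := by linarith
  have h2 : θ⁻¹ ≤ (θ + (1 - θ) * z)⁻¹ := by
    apply inv_anti₀ hqpos hq2
  have h1 := one_le_maj hz
  calc θ⁻¹ * Real.exp (-(s * z))
      ≤ (θ + (1 - θ) * z)⁻¹ * Real.exp (-(s * z)) :=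
        mul_le_mul_of_nonneg_right h2 (Real.exp_nonneg _)
    _ ≤ (1 - z) ^ (-(1/2) : ℝ) * (θ + (1 - θ) * z)⁻¹ * Real.exp (-(s * z)) := by
        have : 0 ≤ (θ + (1 - θ) * z)⁻¹ := inv_nonneg.mpr hqpos.le
        nlinarith [Real.exp_nonneg (-(s * z)), mul_nonneg this (Real.exp_nonneg (-(s * z)))]

lemma hsW_meas : Measurable (hsW θ s) := by
  unfold hsW
  exact (((measurable_const.sub measurable_id).pow_const _ |>.comp measurable_id).mul
    ((measurable_const.add (measurable_const.mul measurable_id)).inv)).mul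
    ((measurable_id.const_mul (-s)).exp) |>.comp measurable_id

lemma int_zw (k : ℕ) (hθ : 1 ≤ θ) (hs : 0 ≤ s) :
    IntegrableOn (fun z => z ^ k * hsW θ s z) (Ioo (0:ℝ) 1) := by
  apply Integrable.mono' HSaux.integrableOn_majorant
  · exact ((measurable_id.pow_const k).mul hsW_meas).aestronglyMeasurable
  · filter_upwards [ae_restrict_mem measurableSet_Ioo] with z hz
    rw [Real.norm_eq_abs,
      abs_of_nonneg (mul_nonneg (pow_nonneg hz.1.le k) (hsW_nonneg hθ hz))]
    have hE : Real.exp (-(s * z)) ≤ 1 := by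
      rw [← Real.exp_zero]
      exact Real.exp_le_exp.mpr (by nlinarith [hz.1.le])
    calc z ^ k * hsW θ s z
        ≤ 1 * ((1 - z) ^ (-(1/2) : ℝ) * Real.exp (-(s * z))) := by
          apply mul_le_mul (pow_le_one₀ hz.1.le hz.2.le) (hsW_le hθ hz)
            (hsW_nonneg hθ hz) one_pos.le
      _ ≤ (1 - z) ^ (-(1/2) : ℝ) := by
          rw [one_mul]
          nlinarith [maj_nonneg hz]

lemma int_w (hθ : 1 ≤ θ) (hs : 0 ≤ s) : IntegrableOn (hsW θ s) (Ioo (0:ℝ) 1) := by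
  have := int_zw 0 hθ hs
  simpa using this
end Part2
section Part3
open MeasureTheory Set Real

variable {θ s : ℝ}

lemma N_lb (hθ : 1 ≤ θ) (hs : 1 ≤ s) :
    θ⁻¹ * Real.exp (-1) * (1 / s) ≤ ∫ z in Ioo (0:ℝ) 1, hsW θ s z := by
  have hs0 : (0:ℝ) < s := by linarith
  have hsub : Ioo (0:ℝ) (1/s) ⊆ Ioo 0 1 :=
    Ioo_subset_Ioo le_rfl (by rw [div_le_one hs0]; linarith)
  have hw : IntegrableOn (hsW θ s) (Ioo (0:ℝ) 1) := int_w hθ (by linarith)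
  have h1 : ∫ _z in Ioo (0:ℝ) (1/s), (θ⁻¹ * Real.exp (-1)) = θ⁻¹ * Real.exp (-1) * (1/s) := by
    rw [setIntegral_const, measureReal_def, Real.volume_Ioo, smul_eq_mul]
    rw [ENNReal.toReal_ofReal (by rw [sub_zero]; positivity)]
    ring
  have h2 : θ⁻¹ * Real.exp (-1) * (1/s) ≤ ∫ z in Ioo (0:ℝ) (1/s), hsW θ s z := by
    rw [← h1]
    apply setIntegral_mono_on ?_ (hw.mono_set hsub) measurableSet_Ioo
    · intro z hz
      have hz1 := hsub hz
      calc θ⁻¹ * Real.exp (-1) ≤ θ⁻¹ * Real.exp (-(s * z)) := by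
            apply mul_le_mul_of_nonneg_left _ (inv_nonneg.mpr (by linarith))
            apply Real.exp_le_exp.mpr
            have h3 : z < 1/s := hz.2
            rw [neg_le_neg_iff]
            calc s * z ≤ s * (1/s) := by nlinarith [hz.1.le]
              _ = 1 := by field_simp
        _ ≤ hsW θ s z := hsW_ge hθ hz1
    · exact (integrableOn_const_iff).mpr (Or.inr (by rw [Real.volume_Ioo]; exact ENNReal.ofReal_lt_top))
  refine h2.trans (setIntegral_mono_set hw ?_ (HasSubset.Subset.eventuallyLE hsub))
  filter_upwards [ae_restrict_mem measurableSet_Ioo] with z hz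
  exact hsW_nonneg hθ hz

lemma Ik_ub (k : ℕ) (Ck : ℝ) (hCk0 : 0 ≤ Ck)
    (hCk : ∀ x : ℝ, 0 ≤ x → x ^ k * Real.exp (-x) ≤ Ck)
    (hθ : 1 ≤ θ) (hs : 1 ≤ s) :
    ∫ z in Ioo (0:ℝ) 1, z ^ k * hsW θ s z
      ≤ Real.sqrt 2 * Ck * (2/s) ^ k * (2/s) + Real.exp (-(s/2)) * 2 := by
  have hs0 : (0:ℝ) < s := by linarith
  set A := Real.sqrt 2 * Ck * (2/s) ^ k with hA
  have hA0 : 0 ≤ A := mul_nonneg (mul_nonneg (Real.sqrt_nonneg 2) hCk0) (by positivity)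
  have f1int : IntegrableOn (fun z : ℝ => A * Real.exp (-(s/2 * z))) (Ioo (0:ℝ) 1) := by
    apply Integrable.const_mul
    exact ((Real.continuous_exp.comp (by continuity)).integrableOn_Icc).mono_set
      Ioo_subset_Icc_self
  have f2int : IntegrableOn
      (fun z : ℝ => Real.exp (-(s/2)) * (1 - z) ^ (-(1/2) : ℝ)) (Ioo (0:ℝ) 1) :=
    HSaux.integrableOn_majorant.const_mul _
  have hpt : ∀ z ∈ Ioo (0:ℝ) 1, z ^ k * hsW θ s z
      ≤ A * Real.exp (-(s/2 * z)) + Real.exp (-(s/2)) * (1 - z) ^ (-(1/2) : ℝ) := by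
    intro z hz
    have hw := hsW_le (s := s) hθ hz
    have hmaj := maj_nonneg hz
    have hzk0 : (0:ℝ) ≤ z ^ k := pow_nonneg hz.1.le k
    have hE2 : (0:ℝ) ≤ Real.exp (-(s/2 * z)) := Real.exp_nonneg _
    rcases le_or_gt z (1/2) with hc | hc
    · -- z ≤ 1/2
      have hm : (1 - z) ^ (-(1/2) : ℝ) ≤ Real.sqrt 2 := by
        have he : ((1:ℝ)/2) ^ (-(1/2) : ℝ) = Real.sqrt 2 := by
          rw [Real.sqrt_eq_rpow, one_div, Real.inv_rpow (by norm_num),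
            ← Real.rpow_neg (by norm_num)]
          norm_num
        rw [← he]
        exact Real.rpow_le_rpow_of_nonpos (by norm_num) (by linarith [hz.2]) (by norm_num)
      have hzk : z ^ k * Real.exp (-(s/2 * z)) ≤ Ck * (2/s) ^ k := by
        have h := hCk (s/2 * z) (mul_nonneg (by positivity) hz.1.le)
        rw [mul_pow] at h
        have hpow : (0:ℝ) < (s/2) ^ k := by positivity
        have hinv : (2/s) ^ k = ((s/2) ^ k)⁻¹ := by
          rw [← inv_pow, inv_div]
        rw [hinv, ← div_eq_mul_inv, le_div_iff₀ hpow]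
        nlinarith [h]
      have hsplit : Real.exp (-(s * z)) = Real.exp (-(s/2 * z)) * Real.exp (-(s/2 * z)) := by
        rw [← Real.exp_add]; ring_nf
      calc z ^ k * hsW θ s z
          ≤ z ^ k * ((1 - z) ^ (-(1/2) : ℝ) * Real.exp (-(s * z))) :=
            mul_le_mul_of_nonneg_left hw hzk0
        _ ≤ z ^ k * (Real.sqrt 2 * Real.exp (-(s * z))) := by
            apply mul_le_mul_of_nonneg_left _ hzk0
            exact mul_le_mul_of_nonneg_right hm (Real.exp_nonneg _)
        _ = Real.sqrt 2 * (z ^ k * Real.exp (-(s/2 * z))) * Real.exp (-(s/2 * z)) := by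
            rw [hsplit]; ring
        _ ≤ Real.sqrt 2 * (Ck * (2/s) ^ k) * Real.exp (-(s/2 * z)) := by
            apply mul_le_mul_of_nonneg_right _ hE2
            exact mul_le_mul_of_nonneg_left hzk (Real.sqrt_nonneg 2)
        _ = A * Real.exp (-(s/2 * z)) := by rw [hA]; ring
        _ ≤ A * Real.exp (-(s/2 * z)) + Real.exp (-(s/2)) * (1 - z) ^ (-(1/2) : ℝ) := by
            nlinarith [mul_nonneg (Real.exp_nonneg (-(s/2))) hmaj]
    · -- 1/2 < z
      have hE : Real.exp (-(s * z)) ≤ Real.exp (-(s/2)) := by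
        apply Real.exp_le_exp.mpr
        rw [neg_le_neg_iff]
        nlinarith
      calc z ^ k * hsW θ s z
          ≤ z ^ k * ((1 - z) ^ (-(1/2) : ℝ) * Real.exp (-(s * z))) :=
            mul_le_mul_of_nonneg_left hw hzk0
        _ ≤ 1 * ((1 - z) ^ (-(1/2) : ℝ) * Real.exp (-(s/2))) := by
            apply mul_le_mul (pow_le_one₀ hz.1.le hz.2.le)
              (mul_le_mul_of_nonneg_left hE hmaj)
              (mul_nonneg hmaj (Real.exp_nonneg _)) one_pos.le
        _ = Real.exp (-(s/2)) * (1 - z) ^ (-(1/2) : ℝ) := by ring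
        _ ≤ A * Real.exp (-(s/2 * z)) + Real.exp (-(s/2)) * (1 - z) ^ (-(1/2) : ℝ) := by
            nlinarith [mul_nonneg hA0 hE2]
  calc ∫ z in Ioo (0:ℝ) 1, z ^ k * hsW θ s z
      ≤ ∫ z in Ioo (0:ℝ) 1,
          (A * Real.exp (-(s/2 * z)) + Real.exp (-(s/2)) * (1 - z) ^ (-(1/2) : ℝ)) :=
        setIntegral_mono_on (int_zw k hθ (by linarith)) (f1int.add f2int)
          measurableSet_Ioo hpt
    _ = A * (∫ z in Ioo (0:ℝ) 1, Real.exp (-(s/2 * z)))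
        + Real.exp (-(s/2)) * (∫ z in Ioo (0:ℝ) 1, (1 - z) ^ (-(1/2) : ℝ)) := by
        rw [integral_add f1int f2int, integral_const_mul, integral_const_mul]
    _ ≤ A * (2/s) + Real.exp (-(s/2)) * 2 := by
        have he := HSaux.integral_exp_le (c := s/2) (by positivity)
        rw [HSaux.integral_majorant]
        have h2s : 1 / (s/2) = 2/s := by field_simp
        apply add_le_add_left
        apply mul_le_mul_of_nonneg_left _ hA0
        exact he.trans_eq h2s
    _ = Real.sqrt 2 * Ck * (2/s) ^ k * (2/s) + Real.exp (-(s/2)) * 2 := by rw [hA]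
end Part3
section Part4
open MeasureTheory Set Real Filter

variable {θ s : ℝ}

lemma E_nonneg (hθ : 1 ≤ θ) (k : ℕ) : 0 ≤ hsE θ s k :=
  div_nonneg
    (setIntegral_nonneg measurableSet_Ioo fun z hz =>
      mul_nonneg (pow_nonneg hz.1.le k) (hsW_nonneg hθ hz))
    (setIntegral_nonneg measurableSet_Ioo fun z hz => hsW_nonneg hθ hz)

lemma E_ub (k : ℕ) (Ck : ℝ) (hCk0 : 0 ≤ Ck)
    (hCk : ∀ x : ℝ, 0 ≤ x → x ^ k * Real.exp (-x) ≤ Ck)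
    (hθ : 1 ≤ θ) (hs : 1 ≤ s) :
    hsE θ s k ≤ (Real.sqrt 2 * Ck * (2/s) ^ k * (2/s) + Real.exp (-(s/2)) * 2)
      * (θ * Real.exp 1 * s) := by
  have hs0 : (0:ℝ) < s := lt_of_lt_of_le one_pos hs
  have hθ0 : (0:ℝ) < θ := lt_of_lt_of_le one_pos hθ
  have hI0 : 0 ≤ ∫ z in Ioo (0:ℝ) 1, z ^ k * hsW θ s z :=
    setIntegral_nonneg measurableSet_Ioo fun z hz =>
      mul_nonneg (pow_nonneg hz.1.le k) (hsW_nonneg hθ hz)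
  have hc : 0 < θ⁻¹ * Real.exp (-1) * (1/s) :=
    mul_pos (mul_pos (inv_pos.mpr hθ0) (Real.exp_pos _)) (by positivity)
  have hN := N_lb hθ hs
  calc hsE θ s k
      ≤ (∫ z in Ioo (0:ℝ) 1, z ^ k * hsW θ s z) / (θ⁻¹ * Real.exp (-1) * (1/s)) := by
        unfold hsE
        gcongr
    _ = (∫ z in Ioo (0:ℝ) 1, z ^ k * hsW θ s z) * (θ * Real.exp 1 * s) := by
        rw [div_eq_mul_inv]
        congr 1
        rw [mul_inv, mul_inv, Real.exp_neg, inv_inv, inv_inv, one_div, inv_inv]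
    _ ≤ (Real.sqrt 2 * Ck * (2/s) ^ k * (2/s) + Real.exp (-(s/2)) * 2)
          * (θ * Real.exp 1 * s) := by
        apply mul_le_mul_of_nonneg_right (Ik_ub k Ck hCk0 hCk hθ hs)
        exact mul_nonneg (mul_nonneg hθ0.le (Real.exp_nonneg _)) hs0.le

lemma hC1 : ∀ x : ℝ, 0 ≤ x → x ^ 1 * Real.exp (-x) ≤ 1 := by
  intro x hx
  rw [pow_one, Real.exp_neg]
  have hE := Real.exp_pos x
  have h := Real.add_one_le_exp x
  have h2 : 0 ≤ (Real.exp x - x) * (Real.exp x)⁻¹ :=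
    mul_nonneg (by linarith) (inv_nonneg.mpr hE.le)
  nlinarith [mul_inv_cancel₀ hE.ne']

lemma hC2 : ∀ x : ℝ, 0 ≤ x → x ^ 2 * Real.exp (-x) ≤ 2 := by
  intro x hx
  rw [Real.exp_neg]
  have hE := Real.exp_pos x
  have h := Real.quadratic_le_exp_of_nonneg hx
  have h2 : 0 ≤ (2 * Real.exp x - x ^ 2) * (Real.exp x)⁻¹ :=
    mul_nonneg (by nlinarith) (inv_nonneg.mpr hE.le)
  nlinarith [mul_inv_cancel₀ hE.ne']

lemma E1_ub (hθ : 1 ≤ θ) (hs : 1 ≤ s) :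
    hsE θ s 1 ≤ θ * Real.exp 1 *
      (4 * Real.sqrt 2 * (1/s) + 2 * (s ^ (1:ℕ) * Real.exp (-(1/2) * s))) := by
  have hs0 : (0:ℝ) < s := lt_of_lt_of_le one_pos hs
  have h := E_ub 1 1 one_pos.le hC1 hθ hs
  rw [show -(s/2) = -(1/2) * s by ring] at h
  refine h.trans_eq ?_
  field_simp
  ring

lemma sE2_ub (hθ : 1 ≤ θ) (hs : 1 ≤ s) :
    s * hsE θ s 2 ≤ θ * Real.exp 1 *
      (16 * Real.sqrt 2 * (1/s) + 2 * (s ^ (2:ℕ) * Real.exp (-(1/2) * s))) := by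
  have hs0 : (0:ℝ) < s := lt_of_lt_of_le one_pos hs
  have h := E_ub 2 2 (by norm_num) hC2 hθ hs
  rw [show -(s/2) = -(1/2) * s by ring] at h
  have h2 := mul_le_mul_of_nonneg_left h hs0.le
  refine h2.trans_eq ?_
  field_simp
  ring

lemma sE1_ub (hθ : 1 ≤ θ) (hs : 1 ≤ s) :
    s * hsE θ s 1 ≤ θ * Real.exp 1 *
      (4 * Real.sqrt 2 + 2 * (s ^ (2:ℕ) * Real.exp (-(1/2) * s))) := by
  have hs0 : (0:ℝ) < s := lt_of_lt_of_le one_pos hs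
  have h := E1_ub hθ hs
  have h2 := mul_le_mul_of_nonneg_left h hs0.le
  refine h2.trans_eq ?_
  field_simp

lemma tendsto_poly_exp (n : ℕ) :
    Tendsto (fun s : ℝ => s ^ n * Real.exp (-(1/2) * s)) atTop (nhds 0) := by
  have h := tendsto_rpow_mul_exp_neg_mul_atTop_nhds_zero (n : ℝ) (1/2) (by norm_num)
  exact h.congr fun s => by rw [Real.rpow_natCast]

lemma tendsto_one_div : Tendsto (fun s : ℝ => 1 / s) atTop (nhds 0) :=
  tendsto_inv_atTop_zero.congr fun s => (one_div s).symm
end Part4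
section Part5
open MeasureTheory Set Real Filter

variable {θ : ℝ}

lemma lim1 (hθ : 1 ≤ θ) : Tendsto (fun s => hsE θ s 1) atTop (nhds (0:ℝ)) := by
  have hG1 : Tendsto (fun s : ℝ => θ * Real.exp 1 *
      (4 * Real.sqrt 2 * (1/s) + 2 * (s ^ (1:ℕ) * Real.exp (-(1/2) * s))))
      atTop (nhds 0) := by
    have := ((tendsto_one_div.const_mul (4 * Real.sqrt 2)).add
      ((tendsto_poly_exp 1).const_mul 2)).const_mul (θ * Real.exp 1)
    simpa using this
  apply tendsto_of_tendsto_of_tendsto_of_le_of_le' tendsto_const_nhds hG1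
  · exact Eventually.of_forall fun s => E_nonneg hθ 1
  · filter_upwards [eventually_ge_atTop 1] with s hs using E1_ub hθ hs

lemma lim2 (hθ : 1 ≤ θ) :
    Tendsto (fun s => s * hsE θ s 2) atTop (nhds (0:ℝ)) := by
  have hG2 : Tendsto (fun s : ℝ => θ * Real.exp 1 *
      (16 * Real.sqrt 2 * (1/s) + 2 * (s ^ (2:ℕ) * Real.exp (-(1/2) * s))))
      atTop (nhds 0) := by
    have := ((tendsto_one_div.const_mul (16 * Real.sqrt 2)).add
      ((tendsto_poly_exp 2).const_mul 2)).const_mul (θ * Real.exp 1)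
    simpa using this
  apply tendsto_of_tendsto_of_tendsto_of_le_of_le' tendsto_const_nhds hG2
  · filter_upwards [eventually_ge_atTop 0] with s hs
    exact mul_nonneg hs (E_nonneg hθ 2)
  · filter_upwards [eventually_ge_atTop 1] with s hs using sE2_ub hθ hs

lemma lim3 (hθ : 1 ≤ θ) :
    Tendsto (fun s => s * hsE θ s 1 ^ 2) atTop (nhds (0:ℝ)) := by
  have hG1 : Tendsto (fun s : ℝ => θ * Real.exp 1 *
      (4 * Real.sqrt 2 * (1/s) + 2 * (s ^ (1:ℕ) * Real.exp (-(1/2) * s))))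
      atTop (nhds 0) := by
    have := ((tendsto_one_div.const_mul (4 * Real.sqrt 2)).add
      ((tendsto_poly_exp 1).const_mul 2)).const_mul (θ * Real.exp 1)
    simpa using this
  have hF : Tendsto (fun s : ℝ => θ * Real.exp 1 *
      (4 * Real.sqrt 2 + 2 * (s ^ (2:ℕ) * Real.exp (-(1/2) * s))))
      atTop (nhds (θ * Real.exp 1 * (4 * Real.sqrt 2 + 2 * 0))) := by
    exact ((tendsto_const_nhds.add
      ((tendsto_poly_exp 2).const_mul 2)).const_mul (θ * Real.exp 1))
  have hH := hG1.mul hF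
  rw [zero_mul] at hH
  apply tendsto_of_tendsto_of_tendsto_of_le_of_le' tendsto_const_nhds hH
  · filter_upwards [eventually_ge_atTop 0] with s hs
    exact mul_nonneg hs (sq_nonneg _)
  · filter_upwards [eventually_ge_atTop 1] with s hs
    have hs0 : (0:ℝ) < s := lt_of_lt_of_le one_pos hs
    have h1 := E1_ub hθ hs
    have h2 := sE1_ub hθ hs
    have hE0 := E_nonneg (s := s) hθ 1
    calc s * hsE θ s 1 ^ 2 = hsE θ s 1 * (s * hsE θ s 1) := by ring
      _ ≤ _ := mul_le_mul h1 h2 (mul_nonneg hs0.le hE0) (le_trans hE0 h1)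
end Part5

/-- As `s → ∞` with `θ ≥ 1` fixed (i.e. `τ² ≤ d⁻²`), the component-wise SURE of the
horseshoe regression satisfies `SURE/(2σ²) → 1`, i.e. `SURE → 2σ²`. -/
theorem stmt12 (σ θ : ℝ) (hσ : 0 < σ) (hθ : 1 ≤ θ) :
    Tendsto (fun s => hsSURE σ θ s / (2 * σ ^ 2)) atTop (nhds 1) := by
  have key : (fun s => hsSURE σ θ s / (2 * σ ^ 2)) =
      fun s => 1 - hsE θ s 1 + 2 * s * hsE θ s 2 - s * (hsE θ s 1) ^ 2 := by
    funext s
    unfold hsSURE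
    rw [mul_div_cancel_left₀ _ (by positivity : (2:ℝ) * σ ^ 2 ≠ 0)]
  rw [key]
  have l1 := lim1 hθ
  have l2 := lim2 hθ
  have l3 := lim3 hθ
  have h2 : Tendsto (fun s => 2 * s * hsE θ s 2) atTop (nhds (0:ℝ)) := by
    have := l2.const_mul 2
    simpa [mul_assoc] using this
  have := ((tendsto_const_nhds (x := (1:ℝ))).sub l1).add h2 |>.sub l3
  simpa using this
end

section
/- Let SURE(s) = 2σ²[1 − E(Z) + s E(Z²) + s Var(Z)] where Z has density on (0,1) proportional to (1−z)^{-1/2}{θ+(1−θ)z}^{-1} exp(−sz) with fixed θ > 0. Then SURE(s) is a nondecreasing (indeed increasing) function of s on the interval [0,1]. -/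
open MeasureTheory Set

/-- SURE(s) = 2σ²[1 − E(Z) + s E(Z²) + s Var(Z)] with Var(Z) = E(Z²) − (E Z)². -/
noncomputable def hsSURE' (σ θ s : ℝ) : ℝ :=
  2 * σ ^ 2 * (1 - hsE θ s 1 + s * hsE θ s 2 + s * (hsE θ s 2 - (hsE θ s 1) ^ 2))

namespace SureAux

lemma hsW_pos {θ : ℝ} (hθ : 0 < θ) (s : ℝ) {z : ℝ} (hz : z ∈ Ioo (0:ℝ) 1) :
    0 < hsW θ s z := by
  obtain ⟨h0, h1⟩ := hz
  have h2 : 0 < θ + (1 - θ) * z := by nlinarith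
  have h3 : (0:ℝ) < (1 - z) ^ (-(1/2) : ℝ) := Real.rpow_pos_of_pos (by linarith) _
  exact mul_pos (mul_pos h3 (inv_pos.2 h2)) (Real.exp_pos _)

lemma hsW_contOn {θ : ℝ} (hθ : 0 < θ) (s : ℝ) : ContinuousOn (hsW θ s) (Ioo 0 1) := by
  have h1 : ContinuousOn (fun z : ℝ => (1 - z) ^ (-(1/2) : ℝ)) (Ioo 0 1) :=
    ((continuous_const.sub continuous_id).continuousOn).rpow_const
      (fun x hx => Or.inl (by exact sub_ne_zero.2 (ne_of_gt hx.2)))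
  have h2 : ContinuousOn (fun z : ℝ => (θ + (1 - θ) * z)⁻¹) (Ioo 0 1) :=
    ((continuous_const.add (continuous_const.mul continuous_id)).continuousOn).inv₀
      (fun x hx => by show θ + (1 - θ) * x ≠ 0; exact ne_of_gt (by nlinarith [hx.1, hx.2]))
  have h3 : ContinuousOn (fun z : ℝ => Real.exp (-s * z)) (Ioo 0 1) :=
    (Real.continuous_exp.comp (continuous_const.mul continuous_id)).continuousOn
  exact (h1.mul h2).mul h3

lemma hsW_meas {θ : ℝ} (hθ : 0 < θ) (s : ℝ) :
    AEStronglyMeasurable (hsW θ s) (volume.restrict (Ioo 0 1)) :=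
  (hsW_contOn hθ s).aestronglyMeasurable measurableSet_Ioo

lemma integrable_rpow_base :
    IntegrableOn (fun z : ℝ => (1 - z) ^ (-(1/2) : ℝ)) (Ioo 0 1) := by
  have h : IntervalIntegrable (fun x : ℝ => x ^ (-(1/2) : ℝ)) volume 0 1 :=
    intervalIntegral.intervalIntegrable_rpow' (by norm_num)
  have h2 := h.comp_sub_left 1
  simp only [sub_zero, sub_self] at h2
  have h3 : IntegrableOn (fun x : ℝ => (1 - x) ^ (-(1/2) : ℝ)) (Ioc 0 1) := by
    have := h2.symm
    rwa [intervalIntegrable_iff_integrableOn_Ioc_of_le (by norm_num)] at this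
  exact h3.mono_set Ioo_subset_Ioc_self

lemma hsW_le {θ : ℝ} (hθ : 0 < θ) {s C : ℝ} (hC : |s| ≤ C) {z : ℝ} (hz : z ∈ Ioo (0:ℝ) 1) :
    hsW θ s z ≤ (min θ 1)⁻¹ * Real.exp C * (1 - z) ^ (-(1/2) : ℝ) := by
  obtain ⟨h0, h1⟩ := hz
  have h3 : (0:ℝ) < (1 - z) ^ (-(1/2) : ℝ) := Real.rpow_pos_of_pos (by linarith) _
  have hmin : 0 < min θ 1 := lt_min hθ one_pos
  have h2 : min θ 1 ≤ θ + (1 - θ) * z := by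
    rcases le_total θ 1 with h | h
    · calc min θ 1 ≤ θ := min_le_left _ _
      _ ≤ θ + (1 - θ) * z := by nlinarith
    · calc min θ 1 ≤ 1 := min_le_right _ _
      _ ≤ θ + (1 - θ) * z := by nlinarith
  have hinv : (θ + (1 - θ) * z)⁻¹ ≤ (min θ 1)⁻¹ :=
    inv_anti₀ hmin h2
  have hexp : Real.exp (-s * z) ≤ Real.exp C := by
    apply Real.exp_le_exp.2
    have : -s * z ≤ |s| * z := by
      have := abs_nonneg s
      nlinarith [neg_le_abs s]
    nlinarith [abs_nonneg s]
  unfold hsW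
  have hp : 0 < (θ + (1 - θ) * z) := by nlinarith
  calc (1 - z) ^ (-(1/2) : ℝ) * (θ + (1 - θ) * z)⁻¹ * Real.exp (-s * z)
      ≤ (1 - z) ^ (-(1/2) : ℝ) * (min θ 1)⁻¹ * Real.exp C := by
        apply mul_le_mul (mul_le_mul_of_nonneg_left hinv h3.le) hexp (Real.exp_pos _).le
        positivity
    _ = (min θ 1)⁻¹ * Real.exp C * (1 - z) ^ (-(1/2) : ℝ) := by ring

/-- Master integrability lemma. -/
lemma integrableOn_mul_hsW {θ : ℝ} (hθ : 0 < θ) (s : ℝ) {g : ℝ → ℝ} (hg : Continuous g) :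
    IntegrableOn (fun z => g z * hsW θ s z) (Ioo 0 1) := by
  obtain ⟨C, hC⟩ := (isCompact_Icc (a := (0:ℝ)) (b := 1)).exists_bound_of_continuousOn
    hg.continuousOn
  have hbase := integrable_rpow_base.const_mul ((C + 1) * ((min θ 1)⁻¹ * Real.exp |s|))
  apply Integrable.mono hbase
  · exact (hg.continuousOn.mul (hsW_contOn hθ s)).aestronglyMeasurable measurableSet_Ioo
  · rw [ae_restrict_iff' measurableSet_Ioo]
    filter_upwards with z hz
    have hzI : z ∈ Icc (0:ℝ) 1 := Ioo_subset_Icc_self hz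
    have h1 := hC z hzI
    have h2 := hsW_le hθ (le_refl |s|) hz
    have h3 := hsW_pos hθ s hz
    have h4 : (0:ℝ) < (1 - z) ^ (-(1/2) : ℝ) := Real.rpow_pos_of_pos (by linarith [hz.2]) _
    have hC0 : 0 ≤ C := le_trans (norm_nonneg _) h1
    rw [Real.norm_eq_abs, Real.norm_eq_abs, abs_mul, abs_of_pos h3]
    have hmin : (0:ℝ) < (min θ 1)⁻¹ * Real.exp |s| := by positivity
    rw [abs_of_pos (by positivity : (0:ℝ) < (C + 1) * ((min θ 1)⁻¹ * Real.exp |s|) * (1 - z) ^ (-(1/2):ℝ))]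
    calc |g z| * hsW θ s z ≤ (C + 1) * ((min θ 1)⁻¹ * Real.exp |s| * (1 - z) ^ (-(1/2):ℝ)) := by
          apply mul_le_mul _ h2 h3.le (by linarith)
          · rw [Real.norm_eq_abs] at h1; linarith
      _ = (C + 1) * ((min θ 1)⁻¹ * Real.exp |s|) * (1 - z) ^ (-(1/2):ℝ) := by ring


noncomputable def Nk (θ : ℝ) (k : ℕ) (s : ℝ) : ℝ :=
  ∫ z in Ioo (0:ℝ) 1, z ^ k * hsW θ s z

lemma integrable_Nk {θ : ℝ} (hθ : 0 < θ) (k : ℕ) (s : ℝ) :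
    IntegrableOn (fun z => z ^ k * hsW θ s z) (Ioo 0 1) :=
  integrableOn_mul_hsW hθ s (continuous_pow k)

lemma hsW_shift (θ s z : ℝ) : hsW θ s z = hsW θ 0 z * Real.exp (-s * z) := by
  simp [hsW, mul_assoc]

lemma Nk_nonneg {θ : ℝ} (hθ : 0 < θ) (k : ℕ) (s : ℝ) : 0 ≤ Nk θ k s := by
  apply setIntegral_nonneg measurableSet_Ioo
  intro z hz
  exact mul_nonneg (pow_nonneg hz.1.le k) (hsW_pos hθ s hz).le

lemma Nk_pos {θ : ℝ} (hθ : 0 < θ) (s : ℝ) : 0 < Nk θ 0 s := by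
  have hint : IntegrableOn (fun z : ℝ => z ^ 0 * hsW θ s z) (Ioo 0 1) := integrable_Nk hθ 0 s
  have hnn : (0 : ℝ → ℝ) ≤ᶠ[ae (volume.restrict (Ioo (0:ℝ) 1))] fun z => z ^ 0 * hsW θ s z := by
    filter_upwards [ae_restrict_mem measurableSet_Ioo] with z hz
    simpa using (hsW_pos hθ s hz).le
  rw [Nk, setIntegral_pos_iff_support_of_nonneg_ae hnn hint]
  have hsub : Ioo (0:ℝ) 1 ⊆ (Function.support fun z : ℝ => z ^ 0 * hsW θ s z) ∩ Ioo 0 1 := by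
    intro z hz
    refine ⟨?_, hz⟩
    simp only [Function.mem_support, pow_zero, one_mul]
    exact ne_of_gt (hsW_pos hθ s hz)
  calc (0 : ENNReal) < volume (Ioo (0:ℝ) 1) := by simp [Real.volume_Ioo]
    _ ≤ _ := measure_mono hsub

lemma hasDerivAt_Nk {θ : ℝ} (hθ : 0 < θ) (k : ℕ) (s₀ : ℝ) :
    HasDerivAt (fun s => Nk θ k s) (-(Nk θ (k+1) s₀)) s₀ := by
  have key := hasDerivAt_integral_of_dominated_loc_of_deriv_le
    (μ := volume.restrict (Ioo (0:ℝ) 1))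
    (F := fun s z => z ^ k * hsW θ s z)
    (F' := fun s z => -(z ^ (k+1) * hsW θ s z))
    (x₀ := s₀) (s := Metric.ball s₀ 1) (bound := fun z => Real.exp (|s₀| + 1) * (z ^ k * hsW θ 0 z))
    (Metric.ball_mem_nhds s₀ one_pos)
    (by
      filter_upwards with s
      exact ((continuous_pow k).continuousOn.mul (hsW_contOn hθ s)).aestronglyMeasurable
        measurableSet_Ioo)
    (integrable_Nk hθ k s₀)
    ((((continuous_pow (k+1)).continuousOn.mul (hsW_contOn hθ s₀)).aestronglyMeasurable
        measurableSet_Ioo).neg)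
    (by
      filter_upwards [ae_restrict_mem measurableSet_Ioo] with z hz
      intro x hx
      have hw0 := hsW_pos hθ 0 hz
      have hwx := hsW_pos hθ x hz
      have hx' : |x| ≤ |s₀| + 1 := by
        have h1 : |x - s₀| < 1 := by simpa [Real.dist_eq] using Metric.mem_ball.mp hx
        have h2 := abs_sub_abs_le_abs_sub x s₀
        linarith
      rw [norm_neg, Real.norm_eq_abs,
        abs_of_nonneg (mul_nonneg (pow_nonneg hz.1.le _) hwx.le), hsW_shift θ x z]
      have h1 : z ^ (k+1) ≤ z ^ k := pow_le_pow_of_le_one hz.1.le hz.2.le (Nat.le_succ k)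
      have h2 : Real.exp (-x * z) ≤ Real.exp (|s₀| + 1) := by
        apply Real.exp_le_exp.2
        nlinarith [neg_le_abs x, abs_nonneg x, hz.1.le, hz.2.le]
      calc z ^ (k+1) * (hsW θ 0 z * Real.exp (-x * z))
          ≤ z ^ k * (hsW θ 0 z * Real.exp (|s₀| + 1)) := by
            apply mul_le_mul h1 (mul_le_mul_of_nonneg_left h2 hw0.le)
              (by positivity) (pow_nonneg hz.1.le _)
        _ = Real.exp (|s₀| + 1) * (z ^ k * hsW θ 0 z) := by ring)
    ((integrable_Nk hθ k 0).const_mul _)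
    (by
      filter_upwards [ae_restrict_mem measurableSet_Ioo] with z hz
      intro x hx
      have heq : (fun x : ℝ => z ^ k * hsW θ x z)
          = fun x => (z ^ k * hsW θ 0 z) * Real.exp (-x * z) := by
        funext y; rw [hsW_shift θ y z]; ring
      rw [heq]
      have hlin : HasDerivAt (fun x : ℝ => -x * z) (-z) x := by
        simpa using ((hasDerivAt_id x).neg.mul_const z)
      have hd := hlin.exp
      have := hd.const_mul (z ^ k * hsW θ 0 z)
      refine this.congr_deriv ?_
      rw [hsW_shift θ x z]; ring)
  have h2 : (∫ z in Ioo (0:ℝ) 1, -(z ^ (k+1) * hsW θ s₀ z)) = -(Nk θ (k+1) s₀) := by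
    rw [Nk, integral_neg]
  have h3 := key.2
  rw [h2] at h3
  exact h3

lemma integral_cubic {θ : ℝ} (hθ : 0 < θ) (s a b c d : ℝ) :
    ∫ z in Ioo (0:ℝ) 1, (a + b * z + c * z ^ 2 + d * z ^ 3) * hsW θ s z
      = a * Nk θ 0 s + b * Nk θ 1 s + c * Nk θ 2 s + d * Nk θ 3 s := by
  have h0 := integrable_Nk hθ 0 s
  have h1 := integrable_Nk hθ 1 s
  have h2 := integrable_Nk hθ 2 s
  have h3 := integrable_Nk hθ 3 s
  have g3 : Integrable (fun z : ℝ => c * (z ^ 2 * hsW θ s z) + d * (z ^ 3 * hsW θ s z))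
      (volume.restrict (Ioo 0 1)) := (h2.const_mul c).add (h3.const_mul d)
  have g2 : Integrable (fun z : ℝ => b * (z ^ 1 * hsW θ s z)
      + (c * (z ^ 2 * hsW θ s z) + d * (z ^ 3 * hsW θ s z)))
      (volume.restrict (Ioo 0 1)) := (h1.const_mul b).add g3
  have heq : (fun z : ℝ => (a + b * z + c * z ^ 2 + d * z ^ 3) * hsW θ s z)
      = fun z => a * (z ^ 0 * hsW θ s z) + (b * (z ^ 1 * hsW θ s z)
          + (c * (z ^ 2 * hsW θ s z) + d * (z ^ 3 * hsW θ s z))) := by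
    funext z; ring
  rw [heq, integral_add (h0.const_mul a) g2,
    integral_add (h1.const_mul b) g3,
    integral_add (h2.const_mul c) (h3.const_mul d),
    integral_const_mul, integral_const_mul, integral_const_mul, integral_const_mul]
  simp only [Nk]
  ring

lemma var_pos {θ : ℝ} (hθ : 0 < θ) (s : ℝ) :
    0 < Nk θ 2 s * Nk θ 0 s - (Nk θ 1 s) ^ 2 := by
  set μ := Nk θ 1 s / Nk θ 0 s with hμ
  have hN0 := Nk_pos hθ s
  have hint : IntegrableOn (fun z : ℝ => (z - μ) ^ 2 * hsW θ s z) (Ioo 0 1) :=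
    integrableOn_mul_hsW hθ s (by continuity)
  have hnn : (0 : ℝ → ℝ) ≤ᶠ[ae (volume.restrict (Ioo (0:ℝ) 1))]
      fun z => (z - μ) ^ 2 * hsW θ s z := by
    filter_upwards [ae_restrict_mem measurableSet_Ioo] with z hz
    exact mul_nonneg (sq_nonneg _) (hsW_pos hθ s hz).le
  have hpos : 0 < ∫ z in Ioo (0:ℝ) 1, (z - μ) ^ 2 * hsW θ s z := by
    rw [setIntegral_pos_iff_support_of_nonneg_ae hnn hint]
    have hsub : Ioo (0:ℝ) 1 \ {μ}
        ⊆ (Function.support fun z : ℝ => (z - μ) ^ 2 * hsW θ s z) ∩ Ioo 0 1 := by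
      intro z hz
      refine ⟨?_, hz.1⟩
      have hzμ : z ≠ μ := by simpa using hz.2
      simp only [Function.mem_support]
      exact ne_of_gt (mul_pos (sq_pos_of_ne_zero (sub_ne_zero.2 hzμ)) (hsW_pos hθ s hz.1))
    calc (0 : ENNReal) < volume (Ioo (0:ℝ) 1 \ {μ}) := by
          rw [measure_diff_null (measure_singleton μ)]; simp [Real.volume_Ioo]
      _ ≤ _ := measure_mono hsub
  have hexp : (∫ z in Ioo (0:ℝ) 1, (z - μ) ^ 2 * hsW θ s z)
      = μ ^ 2 * Nk θ 0 s + (-2 * μ) * Nk θ 1 s + 1 * Nk θ 2 s + 0 * Nk θ 3 s := by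
    rw [← integral_cubic hθ s (μ ^ 2) (-2 * μ) 1 0]
    congr 1; funext z; ring
  rw [hexp] at hpos
  have hthis : μ * Nk θ 0 s = Nk θ 1 s := by rw [hμ]; exact div_mul_cancel₀ _ hN0.ne'
  have hpos' := mul_pos hpos hN0
  have e1 : μ * Nk θ 0 s * (μ * Nk θ 0 s) = Nk θ 1 s * Nk θ 1 s := by rw [hthis]
  have e2 : μ * Nk θ 0 s * Nk θ 1 s = Nk θ 1 s * Nk θ 1 s := by rw [hthis]
  nlinarith [hpos', e1, e2]

lemma int_hsW_eq (θ s : ℝ) : (∫ z in Ioo (0:ℝ) 1, hsW θ s z) = Nk θ 0 s := by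
  rw [Nk]; congr 1; funext z; simp

noncomputable def sureDeriv (σ θ s : ℝ) : ℝ :=
  2 * σ ^ 2 * ((Nk θ 2 s * Nk θ 0 s - (Nk θ 1 s) ^ 2) / (Nk θ 0 s) ^ 2
    + (Nk θ 2 s / Nk θ 0 s
        + s * (Nk θ 1 s * Nk θ 2 s / (Nk θ 0 s) ^ 2 - Nk θ 3 s / Nk θ 0 s))
    + ((Nk θ 2 s / Nk θ 0 s - (Nk θ 1 s / Nk θ 0 s) ^ 2)
        + s * (3 * Nk θ 1 s * Nk θ 2 s / (Nk θ 0 s) ^ 2 - Nk θ 3 s / Nk θ 0 s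
          - 2 * (Nk θ 1 s / Nk θ 0 s) ^ 3)))

lemma hasDerivAt_SURE (σ : ℝ) {θ : ℝ} (hθ : 0 < θ) (s : ℝ) :
    HasDerivAt (fun s => hsSURE' σ θ s) (sureDeriv σ θ s) s := by
  have hne : ∀ t : ℝ, (∫ z in Ioo (0:ℝ) 1, hsW θ t z) ≠ 0 := by
    intro t; rw [int_hsW_eq]; exact (Nk_pos hθ t).ne'
  have h0 : HasDerivAt (fun t => ∫ z in Ioo (0:ℝ) 1, hsW θ t z) (-(Nk θ 1 s)) s := by
    have h := hasDerivAt_Nk hθ 0 s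
    have heq : (fun t => Nk θ 0 t) = fun t => ∫ z in Ioo (0:ℝ) 1, hsW θ t z := by
      funext t; rw [int_hsW_eq]
    rwa [heq] at h
  have h1 := hasDerivAt_Nk hθ 1 s
  have h2 := hasDerivAt_Nk hθ 2 s
  have hE1 : HasDerivAt (fun t => hsE θ t 1)
      ((-(Nk θ 2 s) * (∫ z in Ioo (0:ℝ) 1, hsW θ s z)
        - Nk θ 1 s * -(Nk θ 1 s)) / (∫ z in Ioo (0:ℝ) 1, hsW θ s z) ^ 2) s :=
    h1.div h0 (hne s)
  have hE2 : HasDerivAt (fun t => hsE θ t 2)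
      ((-(Nk θ 3 s) * (∫ z in Ioo (0:ℝ) 1, hsW θ s z)
        - Nk θ 2 s * -(Nk θ 1 s)) / (∫ z in Ioo (0:ℝ) 1, hsW θ s z) ^ 2) s :=
    h2.div h0 (hne s)
  have hd := ((((hasDerivAt_const s (1:ℝ)).sub hE1).add ((hasDerivAt_id s).mul hE2)).add
      ((hasDerivAt_id s).mul (hE2.sub (hE1.pow 2)))).const_mul (2 * σ ^ 2)
  have hfun : (fun t => hsSURE' σ θ t)
      = (fun t => 2 * σ ^ 2 * (1 - hsE θ t 1 + t * hsE θ t 2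
          + t * (hsE θ t 2 - hsE θ t 1 ^ 2))) := rfl
  rw [hfun]
  refine hd.congr_deriv ?_
  have e0 := int_hsW_eq θ s
  have hE1v : hsE θ s 1 = Nk θ 1 s / Nk θ 0 s := by rw [hsE, e0]; rfl
  have hE2v : hsE θ s 2 = Nk θ 2 s / Nk θ 0 s := by rw [hsE, e0]; rfl
  simp only [id_eq, Pi.sub_apply, Pi.pow_apply, Nat.reduceSub, pow_one, Nat.cast_ofNat]
  rw [sureDeriv, e0, hE1v, hE2v]
  have hN0 := (Nk_pos hθ s).ne'
  field_simp
  ring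

lemma sureDeriv_pos {σ θ : ℝ} (hσ : 0 < σ) (hθ : 0 < θ) {s : ℝ} (hs : s ∈ Ioo (0:ℝ) 1) :
    0 < sureDeriv σ θ s := by
  obtain ⟨hs0, hs1⟩ := hs
  have hN0 := Nk_pos hθ s
  have hN1 := Nk_nonneg hθ 1 s
  have hN2 := Nk_nonneg hθ 2 s
  set μ := Nk θ 1 s / Nk θ 0 s with hμ
  have hμnn : 0 ≤ μ := div_nonneg hN1 hN0.le
  -- Q integral
  have hQeq : (∫ z in Ioo (0:ℝ) 1, z ^ 2 * (1 - s * z) * hsW θ s z)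
      = ∫ z in Ioo (0:ℝ) 1, (0 + 0 * z + 1 * z ^ 2 + (-s) * z ^ 3) * hsW θ s z := by
    congr 1; funext z; ring
  have hQ : (∫ z in Ioo (0:ℝ) 1, z ^ 2 * (1 - s * z) * hsW θ s z)
      = Nk θ 2 s - s * Nk θ 3 s := by
    rw [hQeq, integral_cubic hθ s]; ring
  have hQnn : 0 ≤ ∫ z in Ioo (0:ℝ) 1, z ^ 2 * (1 - s * z) * hsW θ s z := by
    apply setIntegral_nonneg measurableSet_Ioo
    intro z hz
    have h1 : 0 ≤ z ^ 2 * (1 - s * z) := by nlinarith [sq_nonneg z, mul_pos (sub_pos.2 hs1) hz.1, hz.2, hz.1]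
    exact mul_nonneg h1 (hsW_pos hθ s hz).le
  -- R integral
  have hReq : (∫ z in Ioo (0:ℝ) 1, (z - μ) ^ 2 * (1 - s * (z - μ)) * hsW θ s z)
      = ∫ z in Ioo (0:ℝ) 1, ((μ ^ 2 + s * μ ^ 3) + (-2 * μ - 3 * s * μ ^ 2) * z
          + (1 + 3 * s * μ) * z ^ 2 + (-s) * z ^ 3) * hsW θ s z := by
    congr 1; funext z; ring
  have hR : (∫ z in Ioo (0:ℝ) 1, (z - μ) ^ 2 * (1 - s * (z - μ)) * hsW θ s z)
      = (μ ^ 2 + s * μ ^ 3) * Nk θ 0 s + (-2 * μ - 3 * s * μ ^ 2) * Nk θ 1 s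
        + (1 + 3 * s * μ) * Nk θ 2 s + (-s) * Nk θ 3 s := by
    rw [hReq, integral_cubic hθ s]
  have hRnn : 0 ≤ ∫ z in Ioo (0:ℝ) 1, (z - μ) ^ 2 * (1 - s * (z - μ)) * hsW θ s z := by
    apply setIntegral_nonneg measurableSet_Ioo
    intro z hz
    have h1 : 0 ≤ 1 - s * (z - μ) := by nlinarith [mul_nonneg hs0.le hμnn, mul_pos (sub_pos.2 hs1) hz.1, hz.2]
    exact mul_nonneg (mul_nonneg (sq_nonneg _) h1) (hsW_pos hθ s hz).le
  set Qv := ∫ z in Ioo (0:ℝ) 1, z ^ 2 * (1 - s * z) * hsW θ s z with hQv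
  set Rv := ∫ z in Ioo (0:ℝ) 1, (z - μ) ^ 2 * (1 - s * (z - μ)) * hsW θ s z with hRv
  have key : sureDeriv σ θ s = 2 * σ ^ 2 *
      ((Nk θ 0 s * (Nk θ 2 s * Nk θ 0 s - Nk θ 1 s ^ 2) + (Nk θ 0 s) ^ 2 * Qv
        + s * (Nk θ 0 s * Nk θ 1 s * Nk θ 2 s) + (Nk θ 0 s) ^ 2 * Rv) / (Nk θ 0 s) ^ 3) := by
    rw [sureDeriv, hQ, hR, hμ]
    have hne := hN0.ne'
    field_simp
    ring
  rw [key]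
  have t1 : 0 < Nk θ 0 s * (Nk θ 2 s * Nk θ 0 s - Nk θ 1 s ^ 2) :=
    mul_pos hN0 (var_pos hθ s)
  have t2 : 0 ≤ (Nk θ 0 s) ^ 2 * Qv := mul_nonneg (sq_nonneg _) hQnn
  have t3 : 0 ≤ s * (Nk θ 0 s * Nk θ 1 s * Nk θ 2 s) := by positivity
  have t4 : 0 ≤ (Nk θ 0 s) ^ 2 * Rv := mul_nonneg (sq_nonneg _) hRnn
  have hnum : 0 < Nk θ 0 s * (Nk θ 2 s * Nk θ 0 s - Nk θ 1 s ^ 2) + (Nk θ 0 s) ^ 2 * Qv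
      + s * (Nk θ 0 s * Nk θ 1 s * Nk θ 2 s) + (Nk θ 0 s) ^ 2 * Rv := by linarith
  have : (0:ℝ) < 2 * σ ^ 2 := by positivity
  exact mul_pos this (div_pos hnum (pow_pos hN0 3))

end SureAux

theorem stmt15 (σ θ : ℝ) (hσ : 0 < σ) (hθ : 0 < θ) :
    StrictMonoOn (fun s => hsSURE' σ θ s) (Icc (0:ℝ) 1) := by
  apply strictMonoOn_of_deriv_pos (convex_Icc 0 1)
  · intro x _
    exact (SureAux.hasDerivAt_SURE σ hθ x).differentiableAt.continuousAt.continuousWithinAt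
  · intro x hx
    rw [interior_Icc] at hx
    rw [(SureAux.hasDerivAt_SURE σ hθ x).deriv]
    exact SureAux.sureDeriv_pos hσ hθ hx
end

section
/- Let Z have density on (0,1) proportional to (1−z)^{-1/2}{θ+(1−θ)z}^{-1} e^{-z} (i.e., s = 1) with θ ≥ 1. Then E[Z²] ≤ θ·I₂/I₀ and E[Z] ≥ θ^{-1}·I₁/I₀, where I₀ = ∫₀¹(1−z)^{-1/2}e^{-z}dz, I₁ = ∫₀¹ z(1−z)^{-1/2}e^{-z}dz, I₂ = ∫₀¹ z²(1−z)^{-1/2}e^{-z}dz. Consequently, at θ = 1, SURE(1,1) = 2σ²[1 − E(Z) + 2E(Z²) − (E(Z))²] ≤ 2σ²[1 − I₁/I₀ + 2I₂/I₀ − (I₁/I₀)²] < 2σ². -/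
open MeasureTheory Set

/-- I_k = ∫₀¹ z^k (1-z)^{-1/2} e^{-z} dz. -/
noncomputable def Ik (k : ℕ) : ℝ :=
  ∫ z in Ioo (0:ℝ) 1, z ^ k * (1 - z) ^ (-(1/2) : ℝ) * Real.exp (-z)

noncomputable def Jf (n : ℕ) : ℝ := ∫ z in Ioo (0:ℝ) 1, z ^ n * (1 - z) ^ (-(1/2) : ℝ)

lemma Jint (n : ℕ) : IntegrableOn (fun z : ℝ => z ^ n * (1 - z) ^ (-(1/2) : ℝ)) (Ioo 0 1) := by
  have h1 : IntervalIntegrable (fun x : ℝ => x ^ (-(1/2) : ℝ)) volume 0 1 :=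
    intervalIntegral.intervalIntegrable_rpow' (by norm_num)
  have h2 := (h1.comp_sub_left 1)
  rw [show (1:ℝ) - 0 = 1 by norm_num, show (1:ℝ) - 1 = 0 by norm_num] at h2
  have h3 : IntegrableOn (fun z : ℝ => (1 - z) ^ (-(1/2) : ℝ)) (Ioo 0 1) := by
    have := (intervalIntegrable_iff_integrableOn_Ioo_of_le (by norm_num : (0:ℝ) ≤ 1)).mp h2.symm
    exact this
  refine h3.integrable.mono ?_ ?_
  · apply Measurable.aestronglyMeasurable
    fun_prop
  · rw [ae_restrict_iff' measurableSet_Ioo]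
    filter_upwards with z hz
    have h0 : (0:ℝ) < z := hz.1
    have h1' : z < 1 := hz.2
    have hw : (0:ℝ) ≤ (1 - z) ^ (-(1/2) : ℝ) := Real.rpow_nonneg (by linarith) _
    rw [Real.norm_eq_abs, Real.norm_eq_abs, abs_mul, abs_of_nonneg hw]
    have hzn : |z ^ n| ≤ 1 := by
      rw [abs_pow, abs_of_pos h0]
      exact pow_le_one₀ h0.le h1'.le
    nlinarith [abs_nonneg (z ^ n)]

lemma Jval (n : ℕ) : Jf n = ∑ k ∈ Finset.range (n+1), (n.choose k : ℝ) * (-1)^k / (k + 1/2) := by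
  have h1 : Jf n = ∫ z in (0:ℝ)..1, z ^ n * (1 - z) ^ (-(1/2) : ℝ) := by
    rw [Jf, intervalIntegral.integral_of_le (by norm_num : (0:ℝ) ≤ 1),
      MeasureTheory.integral_Ioc_eq_integral_Ioo]
  have h2 : (∫ z in (0:ℝ)..1, z ^ n * (1 - z) ^ (-(1/2) : ℝ))
      = ∫ u in (0:ℝ)..1, (1 - u) ^ n * u ^ (-(1/2) : ℝ) := by
    have := intervalIntegral.integral_comp_sub_left (fun u => (1 - u) ^ n * u ^ (-(1/2) : ℝ)) 1
      (a := 0) (b := 1)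
    simp only [show (1:ℝ) - 1 = 0 by norm_num, show (1:ℝ) - 0 = 1 by norm_num] at this
    rw [← this]
    congr 1
    funext z
    ring_nf
  have h3 : (∫ u in (0:ℝ)..1, (1 - u) ^ n * u ^ (-(1/2) : ℝ))
      = ∫ u in (0:ℝ)..1, ∑ k ∈ Finset.range (n+1), (n.choose k : ℝ) * (-1)^k * u ^ ((k:ℝ) - 1/2) := by
    apply intervalIntegral.integral_congr
    intro u hu
    rw [uIcc_of_le (by norm_num : (0:ℝ) ≤ 1)] at hu
    rcases eq_or_lt_of_le hu.1 with h | h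
    · simp only [← h]
      rw [Real.zero_rpow (by norm_num)]
      rw [mul_zero]
      symm
      apply Finset.sum_eq_zero
      intro k _
      rw [Real.zero_rpow, mul_zero]
      intro hc
      rcases Nat.eq_zero_or_pos k with hk | hk
      · subst hk; norm_num at hc
      · have : (1:ℝ) ≤ (k:ℝ) := Nat.one_le_cast.mpr hk
        norm_num at hc
        linarith
    · have hexp : (1 - u) ^ n = ∑ k ∈ Finset.range (n+1), (n.choose k : ℝ) * (-1)^k * u ^ k := by
        rw [sub_eq_add_neg, add_comm, add_pow]
        apply Finset.sum_congr rfl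
        intro k hk
        rw [neg_pow]
        ring
      show (1 - u) ^ n * u ^ (-(1/2) : ℝ) = _
      rw [hexp, Finset.sum_mul]
      apply Finset.sum_congr rfl
      intro k _
      rw [mul_assoc, ← Real.rpow_natCast u k, ← Real.rpow_add h]
      ring_nf
  rw [h1, h2, h3, intervalIntegral.integral_finset_sum]
  · apply Finset.sum_congr rfl
    intro k _
    rw [intervalIntegral.integral_const_mul, integral_rpow (Or.inl (by
      have : (0:ℝ) ≤ (k:ℝ) := Nat.cast_nonneg k
      linarith))]
    rw [Real.one_rpow, Real.zero_rpow (by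
      have : (0:ℝ) ≤ (k:ℝ) := Nat.cast_nonneg k
      intro hc; linarith )]
    push_cast
    rw [show (k:ℝ) - 1/2 + 1 = k + 1/2 by ring]
    ring
  · intro k _
    exact (intervalIntegral.intervalIntegrable_rpow' (by
      have : (0:ℝ) ≤ (k:ℝ) := Nat.cast_nonneg k
      linarith)).const_mul _

lemma J0 : Jf 0 = 2/1 := by rw [Jval]; norm_num [Finset.sum_range_succ, Nat.choose]
lemma J1 : Jf 1 = 4/3 := by rw [Jval]; norm_num [Finset.sum_range_succ, Nat.choose]
lemma J2 : Jf 2 = 16/15 := by rw [Jval]; norm_num [Finset.sum_range_succ, Nat.choose]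
lemma J3 : Jf 3 = 32/35 := by rw [Jval]; norm_num [Finset.sum_range_succ, Nat.choose]
lemma J4 : Jf 4 = 256/315 := by rw [Jval]; norm_num [Finset.sum_range_succ, Nat.choose]
lemma J5 : Jf 5 = 512/693 := by rw [Jval]; norm_num [Finset.sum_range_succ, Nat.choose]
lemma J6 : Jf 6 = 2048/3003 := by rw [Jval]; norm_num [Finset.sum_range_succ, Nat.choose]
lemma J7 : Jf 7 = 4096/6435 := by rw [Jval]; norm_num [Finset.sum_range_succ, Nat.choose]
lemma J8 : Jf 8 = 65536/109395 := by rw [Jval]; norm_num [Finset.sum_range_succ, Nat.choose]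

noncomputable def uco : ℕ → ℝ := fun i => match i with
  | 0 => 1 | 1 => -1 | 2 => 1/2 | 3 => -1/6 | 4 => 1/24 | 5 => -1/120 | _ => 7/4320
noncomputable def lco : ℕ → ℝ := fun i => match i with
  | 0 => 1 | 1 => -1 | 2 => 1/2 | 3 => -1/6 | 4 => 1/24 | 5 => -1/120 | _ => -(7/4320)

lemma poly_eq (co : ℕ → ℝ) (k : ℕ) : (fun z : ℝ => (∑ i ∈ Finset.range 7, co i * z ^ (k+i)) * (1 - z) ^ (-(1/2):ℝ))
    = fun z : ℝ => ∑ i ∈ Finset.range 7, co i * (z ^ (k+i) * (1 - z) ^ (-(1/2):ℝ)) := by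
  funext z
  rw [Finset.sum_mul]
  exact Finset.sum_congr rfl fun i _ => by ring

lemma gInt (co : ℕ → ℝ) (k : ℕ) :
    IntegrableOn (fun z : ℝ => (∑ i ∈ Finset.range 7, co i * z ^ (k+i)) * (1 - z) ^ (-(1/2):ℝ)) (Ioo 0 1) := by
  rw [poly_eq]
  exact integrable_finset_sum _ fun i _ => ((Jint (k+i)).const_mul (co i))

lemma sum_int (co : ℕ → ℝ) (k : ℕ) :
    ∫ z in Ioo (0:ℝ) 1, (∑ i ∈ Finset.range 7, co i * z ^ (k+i)) * (1 - z) ^ (-(1/2):ℝ)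
    = ∑ i ∈ Finset.range 7, co i * Jf (k+i) := by
  rw [show (∫ z in Ioo (0:ℝ) 1, (∑ i ∈ Finset.range 7, co i * z ^ (k+i)) * (1 - z) ^ (-(1/2):ℝ))
    = ∫ z in Ioo (0:ℝ) 1, ∑ i ∈ Finset.range 7, co i * (z ^ (k+i) * (1 - z) ^ (-(1/2):ℝ)) from by
      rw [← poly_eq]]
  rw [MeasureTheory.integral_finset_sum _ fun i _ => ((Jint (k+i)).const_mul (co i))]
  exact Finset.sum_congr rfl fun i _ => by rw [MeasureTheory.integral_const_mul]; rfl

lemma expb {z : ℝ} (h0 : 0 < z) (h1 : z < 1) :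
    |Real.exp (-z) - (1 - z + z^2/2 - z^3/6 + z^4/24 - z^5/120)| ≤ 7 * z^6 / 4320 := by
  have h := Real.exp_bound (x := -z) (by rw [abs_neg, abs_of_pos h0]; linarith) (n := 6) (by norm_num)
  have hs : ∑ m ∈ Finset.range 6, (-z)^m / (m.factorial : ℝ)
      = 1 - z + z^2/2 - z^3/6 + z^4/24 - z^5/120 := by
    simp [Finset.sum_range_succ, Nat.factorial]
    ring
  rw [hs, abs_neg, abs_of_pos h0] at h
  have : z^6 * ((6:ℕ).succ / ((6:ℕ).factorial * (6:ℕ) : ℝ)) = 7 * z^6 / 4320 := by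
    norm_num [Nat.factorial]
    ring
  linarith [this ▸ h]

lemma IkInt (k : ℕ) :
    IntegrableOn (fun z : ℝ => z ^ k * (1 - z) ^ (-(1/2):ℝ) * Real.exp (-z)) (Ioo 0 1) := by
  refine (Jint k).integrable.mono ?_ ?_
  · apply Measurable.aestronglyMeasurable; fun_prop
  · rw [ae_restrict_iff' measurableSet_Ioo]
    filter_upwards with z hz
    have h0 : (0:ℝ) < z := hz.1
    have hw : (0:ℝ) ≤ (1 - z) ^ (-(1/2) : ℝ) := Real.rpow_nonneg (by linarith [hz.2]) _
    have hzk : (0:ℝ) ≤ z ^ k := pow_nonneg h0.le k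
    have he : Real.exp (-z) ≤ 1 := Real.exp_le_one_iff.mpr (by linarith)
    rw [Real.norm_eq_abs, Real.norm_eq_abs, abs_of_nonneg (by positivity),
      abs_of_nonneg (by positivity)]
    nlinarith [Real.exp_pos (-z), mul_nonneg hzk hw]

lemma Ik_le (k : ℕ) :
    (∫ z in Ioo (0:ℝ) 1, z ^ k * (1 - z) ^ (-(1/2) : ℝ) * Real.exp (-z))
      ≤ ∑ i ∈ Finset.range 7, uco i * Jf (k+i) := by
  rw [← sum_int]
  refine setIntegral_mono_on (IkInt k) (gInt uco k) measurableSet_Ioo ?_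
  intro z hz
  have h0 : (0:ℝ) < z := hz.1
  have h1 : z < 1 := hz.2
  have hw : (0:ℝ) ≤ (1 - z) ^ (-(1/2) : ℝ) := Real.rpow_nonneg (by linarith) _
  have hzk : (0:ℝ) ≤ z ^ k := pow_nonneg h0.le k
  have he : Real.exp (-z) ≤ 1 - z + z^2/2 - z^3/6 + z^4/24 - z^5/120 + 7*z^6/4320 := by
    have := abs_le.mp (expb h0 h1)
    linarith [this.2]
  have key : z ^ k * (1 - z) ^ (-(1/2):ℝ) * Real.exp (-z)
      ≤ z ^ k * (1 - z) ^ (-(1/2):ℝ) * (1 - z + z^2/2 - z^3/6 + z^4/24 - z^5/120 + 7*z^6/4320) :=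
    mul_le_mul_of_nonneg_left he (mul_nonneg hzk hw)
  refine key.trans (le_of_eq ?_)
  simp only [Finset.sum_range_succ, Finset.sum_range_zero, uco, pow_add]
  ring

lemma Ik_ge (k : ℕ) :
    (∑ i ∈ Finset.range 7, lco i * Jf (k+i))
      ≤ ∫ z in Ioo (0:ℝ) 1, z ^ k * (1 - z) ^ (-(1/2) : ℝ) * Real.exp (-z) := by
  rw [← sum_int]
  refine setIntegral_mono_on (gInt lco k) (IkInt k) measurableSet_Ioo ?_
  intro z hz
  have h0 : (0:ℝ) < z := hz.1
  have h1 : z < 1 := hz.2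
  have hw : (0:ℝ) ≤ (1 - z) ^ (-(1/2) : ℝ) := Real.rpow_nonneg (by linarith) _
  have hzk : (0:ℝ) ≤ z ^ k := pow_nonneg h0.le k
  have he : 1 - z + z^2/2 - z^3/6 + z^4/24 - z^5/120 - 7*z^6/4320 ≤ Real.exp (-z) := by
    have := abs_le.mp (expb h0 h1)
    linarith [this.1]
  have key : z ^ k * (1 - z) ^ (-(1/2):ℝ) * (1 - z + z^2/2 - z^3/6 + z^4/24 - z^5/120 - 7*z^6/4320)
      ≤ z ^ k * (1 - z) ^ (-(1/2):ℝ) * Real.exp (-z) :=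
    mul_le_mul_of_nonneg_left he (mul_nonneg hzk hw)
  refine le_trans (le_of_eq ?_) key
  simp only [Finset.sum_range_succ, Finset.sum_range_zero, lco, pow_add]
  ring

lemma I0_le : (∫ z in Ioo (0:ℝ) 1, z ^ 0 * (1 - z) ^ (-(1/2) : ℝ) * Real.exp (-z)) ≤ 87278/81081 := by
  refine (Ik_le 0).trans (le_of_eq ?_)
  simp only [Finset.sum_range_succ, Finset.sum_range_zero, uco]
  norm_num [J0, J1, J2, J3, J4, J5, J6]

lemma I0_ge : (435494/405405 : ℝ) ≤ ∫ z in Ioo (0:ℝ) 1, z ^ 0 * (1 - z) ^ (-(1/2) : ℝ) * Real.exp (-z) := by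
  refine le_trans (le_of_eq ?_) (Ik_ge 0)
  simp only [Finset.sum_range_succ, Finset.sum_range_zero, lco]
  norm_num [J0, J1, J2, J3, J4, J5, J6]

lemma I1_ge : (3724228/6081075 : ℝ) ≤ ∫ z in Ioo (0:ℝ) 1, z ^ 1 * (1 - z) ^ (-(1/2) : ℝ) * Real.exp (-z) := by
  refine le_trans (le_of_eq ?_) (Ik_ge 1)
  simp only [Finset.sum_range_succ, Finset.sum_range_zero, lco]
  norm_num [J1, J2, J3, J4, J5, J6, J7]

lemma I2_le : (∫ z in Ioo (0:ℝ) 1, z ^ 2 * (1 - z) ^ (-(1/2) : ℝ) * Real.exp (-z)) ≤ 9504112/20675655 := by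
  refine (Ik_le 2).trans (le_of_eq ?_)
  simp only [Finset.sum_range_succ, Finset.sum_range_zero, uco]
  norm_num [J2, J3, J4, J5, J6, J7, J8]

lemma hd_bounds {θ z : ℝ} (hθ : 1 ≤ θ) (h0 : 0 < z) (h1 : z < 1) :
    1 ≤ θ + (1 - θ) * z ∧ θ + (1 - θ) * z ≤ θ := by
  constructor <;> nlinarith

lemma hsWInt {θ : ℝ} (hθ : 1 ≤ θ) (k : ℕ) :
    IntegrableOn (fun z : ℝ => z ^ k * hsW θ 1 z) (Ioo 0 1) := by
  refine (Jint k).integrable.mono ?_ ?_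
  · apply Measurable.aestronglyMeasurable
    unfold hsW
    fun_prop
  · rw [ae_restrict_iff' measurableSet_Ioo]
    filter_upwards with z hz
    have h0 : (0:ℝ) < z := hz.1
    have h1 : z < 1 := hz.2
    obtain ⟨hb1, hb2⟩ := hd_bounds hθ h0 h1
    have hdpos : (0:ℝ) < θ + (1 - θ) * z := by linarith
    have hinv1 : (θ + (1 - θ) * z)⁻¹ ≤ 1 := by
      rw [inv_le_one_iff₀]; right; exact hb1
    have hw : (0:ℝ) ≤ (1 - z) ^ (-(1/2) : ℝ) := Real.rpow_nonneg (by linarith) _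
    have hzk : (0:ℝ) ≤ z ^ k := pow_nonneg h0.le k
    have he : Real.exp (-1 * z) ≤ 1 := Real.exp_le_one_iff.mpr (by linarith)
    rw [Real.norm_eq_abs, Real.norm_eq_abs, hsW,
      abs_of_nonneg (by positivity), abs_of_nonneg (by positivity)]
    have hepos := Real.exp_pos (-1 * z)
    nlinarith [mul_nonneg hzk hw, mul_pos (inv_pos.mpr hdpos) hepos,
      mul_le_one₀ hinv1 hepos.le he]

lemma N_le {θ : ℝ} (hθ : 1 ≤ θ) (k : ℕ) :
    (∫ z in Ioo (0:ℝ) 1, z ^ k * hsW θ 1 z) ≤ Ik k := by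
  refine setIntegral_mono_on (hsWInt hθ k) (IkInt k) measurableSet_Ioo ?_
  intro z hz
  have h0 : (0:ℝ) < z := hz.1
  have h1 : z < 1 := hz.2
  obtain ⟨hb1, hb2⟩ := hd_bounds hθ h0 h1
  have hdpos : (0:ℝ) < θ + (1 - θ) * z := by linarith
  have hinv1 : (θ + (1 - θ) * z)⁻¹ ≤ 1 := by
    rw [inv_le_one_iff₀]; right; exact hb1
  have hw : (0:ℝ) ≤ (1 - z) ^ (-(1/2) : ℝ) := Real.rpow_nonneg (by linarith) _
  have hzk : (0:ℝ) ≤ z ^ k := pow_nonneg h0.le k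
  have he : Real.exp (-1 * z) = Real.exp (-z) := by norm_num
  rw [hsW, he]
  have hepos := (Real.exp_pos (-z)).le
  nlinarith [mul_nonneg (mul_nonneg hzk hw) hepos]

lemma N_ge {θ : ℝ} (hθ : 1 ≤ θ) (k : ℕ) :
    θ⁻¹ * Ik k ≤ ∫ z in Ioo (0:ℝ) 1, z ^ k * hsW θ 1 z := by
  rw [Ik, ← MeasureTheory.integral_const_mul]
  refine setIntegral_mono_on ((IkInt k).const_mul θ⁻¹) (hsWInt hθ k) measurableSet_Ioo ?_
  intro z hz
  have h0 : (0:ℝ) < z := hz.1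
  have h1 : z < 1 := hz.2
  obtain ⟨hb1, hb2⟩ := hd_bounds hθ h0 h1
  have hθ0 : (0:ℝ) < θ := by linarith
  have hdpos : (0:ℝ) < θ + (1 - θ) * z := by linarith
  have hinv2 : θ⁻¹ ≤ (θ + (1 - θ) * z)⁻¹ := by
    gcongr
  have hw : (0:ℝ) ≤ (1 - z) ^ (-(1/2) : ℝ) := Real.rpow_nonneg (by linarith) _
  have hzk : (0:ℝ) ≤ z ^ k := pow_nonneg h0.le k
  have he : Real.exp (-1 * z) = Real.exp (-z) := by norm_num
  rw [hsW, he]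
  have hepos := (Real.exp_pos (-z)).le
  nlinarith [mul_nonneg (mul_nonneg hzk hw) hepos]

lemma Ik0_ge : (435494/405405 : ℝ) ≤ Ik 0 := I0_ge
lemma Ik0_le : Ik 0 ≤ (87278/81081 : ℝ) := I0_le
lemma Ik1_ge : (3724228/6081075 : ℝ) ≤ Ik 1 := I1_ge
lemma Ik2_le : Ik 2 ≤ (9504112/20675655 : ℝ) := I2_le

lemma Ik_nonneg (k : ℕ) : 0 ≤ Ik k := by
  refine setIntegral_nonneg measurableSet_Ioo fun z hz => ?_
  have h0 : (0:ℝ) < z := hz.1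
  have hw : (0:ℝ) ≤ (1 - z) ^ (-(1/2) : ℝ) := Real.rpow_nonneg (by linarith [hz.2]) _
  positivity

lemma hsE11 (k : ℕ) : hsE 1 1 k = Ik k / Ik 0 := by
  have e1 : ∀ m : ℕ, (∫ z in Ioo (0:ℝ) 1, z ^ m * hsW 1 1 z) = Ik m := by
    intro m
    rw [Ik]
    congr 1
    funext z
    rw [hsW]
    norm_num
    ring
  have e2 : (∫ z in Ioo (0:ℝ) 1, hsW 1 1 z) = Ik 0 := by
    rw [← e1 0]
    congr 1
    funext z
    rw [pow_zero, one_mul]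
  rw [hsE, e1, e2]

theorem stmt17 (σ θ : ℝ) (hσ : 0 < σ) (hθ : 1 ≤ θ) :
    hsE θ 1 2 ≤ θ * (Ik 2 / Ik 0)
    ∧ θ⁻¹ * (Ik 1 / Ik 0) ≤ hsE θ 1 1
    ∧ 2 * σ ^ 2 * (1 - hsE 1 1 1 + 2 * hsE 1 1 2 - (hsE 1 1 1) ^ 2)
        ≤ 2 * σ ^ 2 * (1 - Ik 1 / Ik 0 + 2 * (Ik 2 / Ik 0) - (Ik 1 / Ik 0) ^ 2)
    ∧ 2 * σ ^ 2 * (1 - Ik 1 / Ik 0 + 2 * (Ik 2 / Ik 0) - (Ik 1 / Ik 0) ^ 2)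
        < 2 * σ ^ 2 := by
  have hθ0 : (0:ℝ) < θ := by linarith
  have hI0pos : (0:ℝ) < Ik 0 := lt_of_lt_of_le (by norm_num) Ik0_ge
  have hI1pos : (0:ℝ) < Ik 1 := lt_of_lt_of_le (by norm_num) Ik1_ge
  have hDge : θ⁻¹ * Ik 0 ≤ ∫ z in Ioo (0:ℝ) 1, hsW θ 1 z := by
    have := N_ge hθ 0
    simpa [pow_zero] using this
  have hDle : (∫ z in Ioo (0:ℝ) 1, hsW θ 1 z) ≤ Ik 0 := by
    have := N_le hθ 0
    simpa [pow_zero] using this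
  have hDpos : (0:ℝ) < ∫ z in Ioo (0:ℝ) 1, hsW θ 1 z :=
    lt_of_lt_of_le (by positivity) hDge
  refine ⟨?_, ?_, ?_, ?_⟩
  · rw [hsE]
    have h := div_le_div₀ (Ik_nonneg 2) (N_le hθ 2) (by positivity : (0:ℝ) < θ⁻¹ * Ik 0) hDge
    refine h.trans (le_of_eq ?_)
    field_simp
  · rw [hsE]
    have hN1 : θ⁻¹ * Ik 1 ≤ ∫ z in Ioo (0:ℝ) 1, z ^ 1 * hsW θ 1 z := N_ge hθ 1
    have h := div_le_div₀ (le_trans (by positivity) hN1) hN1 hDpos hDle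
    refine le_trans (le_of_eq ?_) h
    rw [mul_div_assoc]
  · rw [hsE11 1, hsE11 2]
  · have hr1 : (3724228/6081075 : ℝ) / (87278/81081 : ℝ) ≤ Ik 1 / Ik 0 :=
      div_le_div₀ (Ik_nonneg 1) Ik1_ge hI0pos Ik0_le
    have hr2 : Ik 2 / Ik 0 ≤ (9504112/20675655 : ℝ) / (435494/405405 : ℝ) :=
      div_le_div₀ (by norm_num) Ik2_le (by norm_num) Ik0_ge
    have hr1' : (0:ℝ) ≤ (3724228/6081075 : ℝ) / (87278/81081 : ℝ) := by norm_num
    have key : 1 - Ik 1 / Ik 0 + 2 * (Ik 2 / Ik 0) - (Ik 1 / Ik 0) ^ 2 < 1 := by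
      nlinarith [sq_nonneg (Ik 1 / Ik 0 - (3724228/6081075 : ℝ) / (87278/81081 : ℝ))]
    have h2σ : (0:ℝ) < 2 * σ ^ 2 := by positivity
    calc 2 * σ ^ 2 * (1 - Ik 1 / Ik 0 + 2 * (Ik 2 / Ik 0) - (Ik 1 / Ik 0) ^ 2)
        < 2 * σ ^ 2 * 1 := by exact (mul_lt_mul_iff_right₀ h2σ).mpr key
      _ = 2 * σ ^ 2 := mul_one _
end
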